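/- arXiv:2104.00600 — 7 statements merged into one kernel-verified Lean document; each statement's English description precedes it below -/
import Mathlib

section
/- If G is a tree of order n ≥ 2, then the average order of a dominating set of G satisfies avd(G) ≤ 2n/3. -/
set_option maxHeartbeats 1000000
set_option linter.unusedSectionVars false

open scoped Classical

/-- The family of all dominating sets of `G`, as a `Finset` of `Finset`s. -/
noncomputable def domSets {V : Type*} [Fintype V] (G : SimpleGraph V) :
    Finset (Finset V) :=
  Finset.univ.filter fun S => ∀ v ∉ S, ∃ u ∈ S, G.Adj u v

/-- The average order of a dominating set of `G`. -/
noncomputable def avd {V : Type*} [Fintype V] (G : SimpleGraph V) : ℚ :=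
  (∑ S ∈ domSets G, (S.card : ℚ)) / ((domSets G).card : ℚ)

/-- A leaf is a vertex of degree one. -/
noncomputable def IsLeaf {V : Type*} [Fintype V] (G : SimpleGraph V) (v : V) : Prop :=
  G.degree v = 1

/-- The set of leaf neighbors of `w` in `G`. -/
noncomputable def leafNbrSet {V : Type*} [Fintype V] (G : SimpleGraph V) (w : V) : Set V :=
  {v | G.Adj w v ∧ IsLeaf G v}

/-- A support vertex is a vertex adjacent to at least one leaf. -/
noncomputable def IsSupport {V : Type*} [Fintype V] (G : SimpleGraph V) (w : V) : Prop :=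
  ∃ v, G.Adj w v ∧ IsLeaf G v


namespace AvdAux

def Inv (n a b c A B C : ℤ) : Prop :=
  0 ≤ b ∧ 0 ≤ c ∧ b + c ≤ a ∧
  0 ≤ (2*n*a - 3*A) + a ∧
  0 ≤ (2*n*a - 3*A) + (2*n*b - 3*B) + c ∧
  c ≤ (2*n*a - 3*A) + (2*n*b - 3*B) + (2*n*c - 3*C) ∧
  b + c ≤ 2*(2*n*a - 3*A) + (2*n*b - 3*B) + (2*n*c - 3*C) + a

lemma inv_leaf : Inv 1 1 0 1 1 0 0 := by norm_num [Inv]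

section
variable {n m a b c A B C a' b' c' A' B' C' : ℤ}

lemma inv_attach (ht : Inv n a b c A B C) (hs : Inv m a' b' c' A' B' C') :
    Inv (n+m) (a*(a'+b'+c')) (b*(a'+b')+c*a') (c*b')
      (A*(a'+b'+c') + a*(A'+B'+C'))
      (B*(a'+b')+b*(A'+B')+C*a'+c*A') (C*b'+c*B') := by
  obtain ⟨hb, hc, h1, h4, h5, h6, h7⟩ := ht
  obtain ⟨hb', hc', h1', h4', h5', h6', h7'⟩ := hs
  have H1 : (0:ℤ) ≤ a - b - c := by linarith
  have H4 : (0:ℤ) ≤ (2*n*a - 3*A) + a := h4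
  have H5 : (0:ℤ) ≤ (2*n*a - 3*A) + (2*n*b - 3*B) + c := h5
  have H6 : (0:ℤ) ≤ (2*n*a - 3*A) + (2*n*b - 3*B) + (2*n*c - 3*C) - c := by linarith
  have H7 : (0:ℤ) ≤ 2*(2*n*a - 3*A) + (2*n*b - 3*B) + (2*n*c - 3*C) + a - b - c := by linarith
  have K1 : (0:ℤ) ≤ a' - b' - c' := by linarith
  have K4 : (0:ℤ) ≤ (2*m*a' - 3*A') + a' := h4'
  have K5 : (0:ℤ) ≤ (2*m*a' - 3*A') + (2*m*b' - 3*B') + c' := h5'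
  have K6 : (0:ℤ) ≤ (2*m*a' - 3*A') + (2*m*b' - 3*B') + (2*m*c' - 3*C') - c' := by linarith
  have K7 : (0:ℤ) ≤ 2*(2*m*a' - 3*A') + (2*m*b' - 3*B') + (2*m*c' - 3*C') + a' - b' - c' := by
    linarith
  refine ⟨?_, ?_, ?_, ?_, ?_, ?_, ?_⟩
  · linarith [mul_nonneg hb K1, mul_nonneg hb hb', mul_nonneg hb hc',
      mul_nonneg hc K1, mul_nonneg hc hb', mul_nonneg hc hc']
  · exact mul_nonneg hc hb'
  · linarith [mul_nonneg H1 K1, mul_nonneg H1 hb', mul_nonneg H1 hc',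
      mul_nonneg hb hc', mul_nonneg hc hc']
  · linarith [mul_nonneg H1 hc', mul_nonneg H1 K6, mul_nonneg hb hc',
      mul_nonneg hb K6, mul_nonneg hc hc', mul_nonneg hc K6,
      mul_nonneg H4 K1, mul_nonneg H4 hb', mul_nonneg H4 hc']
  · linarith [mul_nonneg H1 K6, mul_nonneg hb K5, mul_nonneg hb K6,
      mul_nonneg hc K4, mul_nonneg hc K6, mul_nonneg H5 hb',
      mul_nonneg H6 K1, mul_nonneg H6 hb', mul_nonneg H7 hc']
  · linarith [mul_nonneg H1 K6, mul_nonneg hb K5, mul_nonneg hb K6,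
      mul_nonneg hc K1, mul_nonneg hc hb', mul_nonneg hc K5, mul_nonneg hc K6,
      mul_nonneg H6 K1, mul_nonneg H6 hb', mul_nonneg H7 hc']
  · linarith [mul_nonneg H1 hc', mul_nonneg H1 K6, mul_nonneg hb K5,
      mul_nonneg hb K6, mul_nonneg hc K5, mul_nonneg hc K6,
      mul_nonneg H4 hc', mul_nonneg H7 K1, mul_nonneg H7 hb', mul_nonneg H7 hc']

lemma inv_goal (ht : Inv n a b c A B C) (hs : Inv m a' b' c' A' B' C') :
    3*((A*(a'+b'+c') + a*(A'+B'+C')) + (B*(a'+b')+b*(A'+B')+C*a'+c*A'))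
      ≤ 2*(n+m)*((a*(a'+b'+c')) + (b*(a'+b')+c*a')) := by
  obtain ⟨hb, hc, h1, h4, h5, h6, h7⟩ := ht
  obtain ⟨hb', hc', h1', h4', h5', h6', h7'⟩ := hs
  have H1 : (0:ℤ) ≤ a - b - c := by linarith
  have H5 : (0:ℤ) ≤ (2*n*a - 3*A) + (2*n*b - 3*B) + c := h5
  have H6 : (0:ℤ) ≤ (2*n*a - 3*A) + (2*n*b - 3*B) + (2*n*c - 3*C) - c := by linarith
  have H7 : (0:ℤ) ≤ 2*(2*n*a - 3*A) + (2*n*b - 3*B) + (2*n*c - 3*C) + a - b - c := by linarith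
  have K1 : (0:ℤ) ≤ a' - b' - c' := by linarith
  have K5 : (0:ℤ) ≤ (2*m*a' - 3*A') + (2*m*b' - 3*B') + c' := h5'
  have K6 : (0:ℤ) ≤ (2*m*a' - 3*A') + (2*m*b' - 3*B') + (2*m*c' - 3*C') - c' := by linarith
  have K7 : (0:ℤ) ≤ 2*(2*m*a' - 3*A') + (2*m*b' - 3*B') + (2*m*c' - 3*C') + a' - b' - c' := by
    linarith
  linarith [mul_nonneg H1 K6, mul_nonneg hb K5, mul_nonneg hb K6,
    mul_nonneg hc K7, mul_nonneg H5 hb', mul_nonneg H6 K1, mul_nonneg H6 hb',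
    mul_nonneg H7 hc']

end



variable {V : Type*} [Fintype V] (G : SimpleGraph V)

/-- subsets `S ⊆ U` containing `r` that dominate all of `U` (within `G`). -/
noncomputable def sA (U : Finset V) (r : V) : Finset (Finset V) :=
  U.powerset.filter fun S => r ∈ S ∧ ∀ v ∈ U, v ∉ S → ∃ w ∈ S, G.Adj w v

/-- subsets `S ⊆ U` avoiding `r` that dominate all of `U`. -/
noncomputable def sB (U : Finset V) (r : V) : Finset (Finset V) :=
  U.powerset.filter fun S => r ∉ S ∧ ∀ v ∈ U, v ∉ S → ∃ w ∈ S, G.Adj w v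

/-- subsets `S ⊆ U` avoiding `r` that dominate all of `U` except `r`, which is undominated. -/
noncomputable def sC (U : Finset V) (r : V) : Finset (Finset V) :=
  U.powerset.filter fun S => r ∉ S ∧ (∀ v ∈ U, v ∉ S → v ≠ r → ∃ w ∈ S, G.Adj w v)
    ∧ ¬ ∃ w ∈ S, G.Adj w r

noncomputable def tot (F : Finset (Finset V)) : ℤ := ∑ S ∈ F, (S.card : ℤ)

lemma subset_of_mem_sA {U : Finset V} {r : V} {S : Finset V} (h : S ∈ sA G U r) : S ⊆ U :=
  Finset.mem_powerset.1 (Finset.mem_filter.1 h).1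

lemma subset_of_mem_sB {U : Finset V} {r : V} {S : Finset V} (h : S ∈ sB G U r) : S ⊆ U :=
  Finset.mem_powerset.1 (Finset.mem_filter.1 h).1

lemma subset_of_mem_sC {U : Finset V} {r : V} {S : Finset V} (h : S ∈ sC G U r) : S ⊆ U :=
  Finset.mem_powerset.1 (Finset.mem_filter.1 h).1

lemma sA_singleton (r : V) : sA G {r} r = {{r}} := by
  ext S
  simp only [sA, Finset.mem_filter, Finset.mem_powerset, Finset.subset_singleton_iff,
    Finset.mem_singleton]
  constructor
  · rintro ⟨hS | hS, hr, _⟩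
    · subst hS; simp at hr
    · exact hS
  · rintro rfl
    refine ⟨Or.inr rfl, by simp, ?_⟩
    intro v hv hv'
    subst hv; simp at hv'
lemma sB_singleton (r : V) : sB G {r} r = ∅ := by
  ext S
  simp only [sB, Finset.mem_filter, Finset.mem_powerset, Finset.subset_singleton_iff,
    Finset.notMem_empty, iff_false]
  rintro ⟨hS | hS, hr, hdom⟩
  · subst hS
    obtain ⟨w, hw, -⟩ := hdom r (by simp) (by simp)
    simp at hw
  · subst hS; simp at hr

lemma sC_singleton (r : V) : sC G {r} r = {∅} := by
  ext S
  simp only [sC, Finset.mem_filter, Finset.mem_powerset, Finset.subset_singleton_iff,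
    Finset.mem_singleton]
  constructor
  · rintro ⟨hS | hS, hr, -, -⟩
    · exact hS
    · subst hS; simp at hr
  · rintro rfl
    refine ⟨Or.inl rfl, by simp, ?_, ?_⟩
    · intro v hv _ hne
      exact absurd hv hne
    · rintro ⟨w, hw, -⟩; simp at hw

lemma base_case (r : V) :
    Inv (({r} : Finset V).card : ℤ) ((sA G {r} r).card : ℤ) ((sB G {r} r).card : ℤ)
      ((sC G {r} r).card : ℤ) (tot (sA G {r} r)) (tot (sB G {r} r)) (tot (sC G {r} r)) := by
  rw [sA_singleton, sB_singleton, sC_singleton]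
  have h1 : (({r} : Finset V).card : ℤ) = 1 := by simp
  have h2 : ((({r} : Finset V) : Finset V) ∈ ({{r}} : Finset (Finset V))) := by simp
  have htA : tot ({{r}} : Finset (Finset V)) = 1 := by simp [tot]
  have htB : tot (∅ : Finset (Finset V)) = 0 := by simp [tot]
  have htC : tot ({∅} : Finset (Finset V)) = 0 := by simp [tot]
  rw [htA, htB, htC, h1]
  simpa using inv_leaf


section Decomp

variable {V : Type*} [Fintype V] {G : SimpleGraph V}

lemma inter_union_left {Ut Us : Finset V} (hd : Disjoint Ut Us) {P Q : Finset V}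
    (hP : P ⊆ Ut) (hQ : Q ⊆ Us) : (P ∪ Q) ∩ Ut = P := by
  ext x
  simp only [Finset.mem_inter, Finset.mem_union]
  constructor
  · rintro ⟨hx | hx, hxt⟩
    · exact hx
    · exact absurd (hQ hx) (Finset.disjoint_left.1 hd hxt)
  · intro hx
    exact ⟨Or.inl hx, hP hx⟩

lemma inter_union_right {Ut Us : Finset V} (hd : Disjoint Ut Us) {P Q : Finset V}
    (hP : P ⊆ Ut) (hQ : Q ⊆ Us) : (P ∪ Q) ∩ Us = Q := by
  ext x
  simp only [Finset.mem_inter, Finset.mem_union]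
  constructor
  · rintro ⟨hx | hx, hxs⟩
    · exact absurd (hP hx) (Finset.disjoint_right.1 hd hxs)
    · exact hx
  · intro hx
    exact ⟨Or.inr hx, hQ hx⟩

lemma union_injOn {Ut Us : Finset V} (hd : Disjoint Ut Us) {X Y : Finset (Finset V)}
    (hX : ∀ S ∈ X, S ⊆ Ut) (hY : ∀ S ∈ Y, S ⊆ Us) :
    ∀ p ∈ X ×ˢ Y, ∀ q ∈ X ×ˢ Y,
      (fun p : Finset V × Finset V => p.1 ∪ p.2) p
        = (fun p : Finset V × Finset V => p.1 ∪ p.2) q → p = q := by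
  rintro ⟨S1, S2⟩ h1 ⟨T1, T2⟩ h2 h
  simp only [Finset.mem_product] at h1 h2
  simp only at h
  have e1 : S1 = T1 := by
    rw [← inter_union_left hd (hX _ h1.1) (hY _ h1.2), h,
      inter_union_left hd (hX _ h2.1) (hY _ h2.2)]
  have e2 : S2 = T2 := by
    rw [← inter_union_right hd (hX _ h1.1) (hY _ h1.2), h,
      inter_union_right hd (hX _ h2.1) (hY _ h2.2)]
  simp [e1, e2]

lemma card_image_union {Ut Us : Finset V} (hd : Disjoint Ut Us) {X Y : Finset (Finset V)}
    (hX : ∀ S ∈ X, S ⊆ Ut) (hY : ∀ S ∈ Y, S ⊆ Us) :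
    ((((X ×ˢ Y).image fun p => p.1 ∪ p.2)).card : ℤ) = (X.card : ℤ) * Y.card := by
  rw [Finset.card_image_of_injOn fun p hp q hq h => union_injOn hd hX hY p hp q hq h,
    Finset.card_product]
  push_cast
  ring

lemma tot_image_union {Ut Us : Finset V} (hd : Disjoint Ut Us) {X Y : Finset (Finset V)}
    (hX : ∀ S ∈ X, S ⊆ Ut) (hY : ∀ S ∈ Y, S ⊆ Us) :
    tot ((X ×ˢ Y).image fun p => p.1 ∪ p.2)
      = tot X * Y.card + (X.card : ℤ) * tot Y := by
  rw [tot, Finset.sum_image (union_injOn hd hX hY)]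
  have key : ∀ p ∈ X ×ˢ Y, (((p.1 ∪ p.2 : Finset V)).card : ℤ) = (p.1.card : ℤ) + p.2.card := by
    rintro ⟨S1, S2⟩ hp
    simp only [Finset.mem_product] at hp
    have : Disjoint S1 S2 := hd.mono (hX _ hp.1) (hY _ hp.2)
    rw [Finset.card_union_of_disjoint this]
    push_cast
    ring
  rw [Finset.sum_congr rfl key, Finset.sum_product]
  have h1 : ∀ S ∈ X, (∑ T ∈ Y, ((S.card : ℤ) + T.card)) = (Y.card : ℤ) * S.card + tot Y := by
    intro S hS
    rw [Finset.sum_add_distrib, Finset.sum_const, nsmul_eq_mul, tot]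
  rw [Finset.sum_congr rfl h1, Finset.sum_add_distrib, Finset.sum_const, nsmul_eq_mul,
    ← Finset.mul_sum]
  simp only [tot]
  ring

end Decomp


section Decomp2

variable {V : Type*} [Fintype V] {G : SimpleGraph V}

lemma mem_sA_iff {U : Finset V} {r : V} {S : Finset V} :
    S ∈ sA G U r ↔ S ⊆ U ∧ r ∈ S ∧ ∀ v ∈ U, v ∉ S → ∃ w ∈ S, G.Adj w v := by
  simp [sA, Finset.mem_filter, Finset.mem_powerset, and_assoc]

lemma mem_sB_iff {U : Finset V} {r : V} {S : Finset V} :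
    S ∈ sB G U r ↔ S ⊆ U ∧ r ∉ S ∧ ∀ v ∈ U, v ∉ S → ∃ w ∈ S, G.Adj w v := by
  simp [sB, Finset.mem_filter, Finset.mem_powerset, and_assoc]

lemma mem_sC_iff {U : Finset V} {r : V} {S : Finset V} :
    S ∈ sC G U r ↔ S ⊆ U ∧ r ∉ S ∧ (∀ v ∈ U, v ∉ S → v ≠ r → ∃ w ∈ S, G.Adj w v)
      ∧ ¬ ∃ w ∈ S, G.Adj w r := by
  simp [sC, Finset.mem_filter, Finset.mem_powerset, and_assoc]

lemma disj_sA_sB {U : Finset V} {r : V} : Disjoint (sA G U r) (sB G U r) :=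
  Finset.disjoint_left.2 fun S hS hS' => (mem_sB_iff.1 hS').2.1 (mem_sA_iff.1 hS).2.1

lemma disj_sA_sC {U : Finset V} {r : V} : Disjoint (sA G U r) (sC G U r) :=
  Finset.disjoint_left.2 fun S hS hS' => (mem_sC_iff.1 hS').2.1 (mem_sA_iff.1 hS).2.1

lemma disj_sB_sC {U : Finset V} {r : V} (hr : r ∈ U) : Disjoint (sB G U r) (sC G U r) := by
  refine Finset.disjoint_left.2 fun S hS hS' => ?_
  obtain ⟨-, hrS, hdom⟩ := mem_sB_iff.1 hS
  obtain ⟨-, -, -, hnex⟩ := mem_sC_iff.1 hS'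
  exact hnex (hdom r hr hrS)

section Split
variable {Ut Us : Finset V} {r u : V}

lemma decompA (hd : Disjoint Ut Us) (hr : r ∈ Ut) (hu : u ∈ Us)
    (hru : G.Adj r u) (hcross : ∀ x ∈ Ut, ∀ y ∈ Us, G.Adj x y → x = r ∧ y = u) :
    sA G (Ut ∪ Us) r
      = ((sA G Ut r) ×ˢ (sA G Us u ∪ sB G Us u ∪ sC G Us u)).image fun p => p.1 ∪ p.2 := by
  ext S
  simp only [Finset.mem_image, Finset.mem_product, Finset.mem_union, Prod.exists]
  constructor
  · intro hS
    obtain ⟨hpow, hrS, hdom⟩ := mem_sA_iff.1 hS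
    have hSplit : S ∩ Ut ∪ S ∩ Us = S := by
      rw [← Finset.inter_union_distrib_left]
      exact Finset.inter_eq_left.2 hpow
    refine ⟨S ∩ Ut, S ∩ Us, ⟨?_, ?_⟩, hSplit⟩
    · refine mem_sA_iff.2 ⟨Finset.inter_subset_right, Finset.mem_inter.2 ⟨hrS, hr⟩, ?_⟩
      intro v hv hv'
      have hvS : v ∉ S := fun h => hv' (Finset.mem_inter.2 ⟨h, hv⟩)
      obtain ⟨w, hw, hadj⟩ := hdom v (Finset.mem_union_left _ hv) hvS
      have hwUt : w ∈ Ut := by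
        by_contra hwt
        have hwUs : w ∈ Us := (Finset.mem_union.1 (hpow hw)).resolve_left hwt
        exact hvS ((hcross v hv w hwUs hadj.symm).1 ▸ hrS)
      exact ⟨w, Finset.mem_inter.2 ⟨hw, hwUt⟩, hadj⟩
    · have domUs : u ∈ S → ∀ v ∈ Us, v ∉ S ∩ Us → ∃ w ∈ S ∩ Us, G.Adj w v := by
        intro hus v hv hv'
        have hvS : v ∉ S := fun h => hv' (Finset.mem_inter.2 ⟨h, hv⟩)
        obtain ⟨w, hw, hadj⟩ := hdom v (Finset.mem_union_right _ hv) hvS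
        have hwUs : w ∈ Us := by
          by_contra hws
          have hwUt : w ∈ Ut := (Finset.mem_union.1 (hpow hw)).resolve_right hws
          exact hvS ((hcross w hwUt v hv hadj).2 ▸ hus)
        exact ⟨w, Finset.mem_inter.2 ⟨hw, hwUs⟩, hadj⟩
      have domUs' : ∀ v ∈ Us, v ∉ S ∩ Us → v ≠ u → ∃ w ∈ S ∩ Us, G.Adj w v := by
        intro v hv hv' hvu
        have hvS : v ∉ S := fun h => hv' (Finset.mem_inter.2 ⟨h, hv⟩)
        obtain ⟨w, hw, hadj⟩ := hdom v (Finset.mem_union_right _ hv) hvS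
        have hwUs : w ∈ Us := by
          by_contra hws
          have hwUt : w ∈ Ut := (Finset.mem_union.1 (hpow hw)).resolve_right hws
          exact hvu (hcross w hwUt v hv hadj).2
        exact ⟨w, Finset.mem_inter.2 ⟨hw, hwUs⟩, hadj⟩
      by_cases hus : u ∈ S
      · exact Or.inl (Or.inl (mem_sA_iff.2 ⟨Finset.inter_subset_right,
          Finset.mem_inter.2 ⟨hus, hu⟩, domUs hus⟩))
      · have hun : u ∉ S ∩ Us := fun h => hus (Finset.mem_inter.1 h).1
        by_cases hud : ∃ w ∈ S ∩ Us, G.Adj w u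
        · refine Or.inl (Or.inr (mem_sB_iff.2 ⟨Finset.inter_subset_right, hun, ?_⟩))
          intro v hv hv'
          by_cases hvu : v = u
          · subst hvu; exact hud
          · exact domUs' v hv hv' hvu
        · exact Or.inr (mem_sC_iff.2 ⟨Finset.inter_subset_right, hun, domUs', hud⟩)
  · rintro ⟨St, Ss, ⟨hSt, hSs⟩, rfl⟩
    obtain ⟨hStU, hrSt, hdomt⟩ := mem_sA_iff.1 hSt
    have hSsU : Ss ⊆ Us := by
      rcases hSs with (h | h) | h
      exacts [(mem_sA_iff.1 h).1, (mem_sB_iff.1 h).1, (mem_sC_iff.1 h).1]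
    refine mem_sA_iff.2 ⟨Finset.union_subset_union hStU hSsU,
      Finset.mem_union_left _ hrSt, ?_⟩
    intro v hv hv'
    have hvSt : v ∉ St := fun h => hv' (Finset.mem_union_left _ h)
    have hvSs : v ∉ Ss := fun h => hv' (Finset.mem_union_right _ h)
    rcases Finset.mem_union.1 hv with hvt | hvs
    · obtain ⟨w, hw, hadj⟩ := hdomt v hvt hvSt
      exact ⟨w, Finset.mem_union_left _ hw, hadj⟩
    · rcases hSs with (h | h) | h
      · obtain ⟨w, hw, hadj⟩ := (mem_sA_iff.1 h).2.2 v hvs hvSs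
        exact ⟨w, Finset.mem_union_right _ hw, hadj⟩
      · obtain ⟨w, hw, hadj⟩ := (mem_sB_iff.1 h).2.2 v hvs hvSs
        exact ⟨w, Finset.mem_union_right _ hw, hadj⟩
      · by_cases hvu : v = u
        · subst hvu; exact ⟨r, Finset.mem_union_left _ hrSt, hru⟩
        · obtain ⟨w, hw, hadj⟩ := (mem_sC_iff.1 h).2.2.1 v hvs hvSs hvu
          exact ⟨w, Finset.mem_union_right _ hw, hadj⟩

end Split
end Decomp2


section Decomp3

variable {V : Type*} [Fintype V] {G : SimpleGraph V} {Ut Us : Finset V} {r u : V}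

lemma decompB (hd : Disjoint Ut Us) (hr : r ∈ Ut) (hu : u ∈ Us)
    (hru : G.Adj r u) (hcross : ∀ x ∈ Ut, ∀ y ∈ Us, G.Adj x y → x = r ∧ y = u) :
    sB G (Ut ∪ Us) r
      = ((sB G Ut r) ×ˢ (sA G Us u ∪ sB G Us u)).image (fun p => p.1 ∪ p.2)
        ∪ ((sC G Ut r) ×ˢ (sA G Us u)).image (fun p => p.1 ∪ p.2) := by
  ext S
  simp only [Finset.mem_union, Finset.mem_image, Finset.mem_product, Prod.exists]
  constructor
  · intro hS
    obtain ⟨hpow, hrS, hdom⟩ := mem_sB_iff.1 hS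
    have hSplit : S ∩ Ut ∪ S ∩ Us = S := by
      rw [← Finset.inter_union_distrib_left]
      exact Finset.inter_eq_left.2 hpow
    have hrn : r ∉ S ∩ Ut := fun h => hrS (Finset.mem_inter.1 h).1
    -- domination of Ut-vertices other than r, within S ∩ Ut
    have domUt : ∀ v ∈ Ut, v ∉ S ∩ Ut → v ≠ r → ∃ w ∈ S ∩ Ut, G.Adj w v := by
      intro v hv hv' hvr
      have hvS : v ∉ S := fun h => hv' (Finset.mem_inter.2 ⟨h, hv⟩)
      obtain ⟨w, hw, hadj⟩ := hdom v (Finset.mem_union_left _ hv) hvS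
      have hwUt : w ∈ Ut := by
        by_contra hwt
        have hwUs : w ∈ Us := (Finset.mem_union.1 (hpow hw)).resolve_left hwt
        exact hvr (hcross v hv w hwUs hadj.symm).1
      exact ⟨w, Finset.mem_inter.2 ⟨hw, hwUt⟩, hadj⟩
    -- domination of Us-vertices other than u, within S ∩ Us
    have domUs' : ∀ v ∈ Us, v ∉ S ∩ Us → v ≠ u → ∃ w ∈ S ∩ Us, G.Adj w v := by
      intro v hv hv' hvu
      have hvS : v ∉ S := fun h => hv' (Finset.mem_inter.2 ⟨h, hv⟩)
      obtain ⟨w, hw, hadj⟩ := hdom v (Finset.mem_union_right _ hv) hvS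
      have hwUs : w ∈ Us := by
        by_contra hws
        have hwUt : w ∈ Ut := (Finset.mem_union.1 (hpow hw)).resolve_right hws
        exact hvu (hcross w hwUt v hv hadj).2
      exact ⟨w, Finset.mem_inter.2 ⟨hw, hwUs⟩, hadj⟩
    have domUsFull : u ∈ S → ∀ v ∈ Us, v ∉ S ∩ Us → ∃ w ∈ S ∩ Us, G.Adj w v := by
      intro hus v hv hv'
      by_cases hvu : v = u
      · subst hvu; exact absurd (Finset.mem_inter.2 ⟨hus, hv⟩) hv'
      · exact domUs' v hv hv' hvu
    by_cases hrd : ∃ w ∈ S ∩ Ut, G.Adj w r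
    · -- S ∩ Ut is a sB-set
      left
      refine ⟨S ∩ Ut, S ∩ Us, ⟨mem_sB_iff.2 ⟨Finset.inter_subset_right, hrn, ?_⟩, ?_⟩, hSplit⟩
      · intro v hv hv'
        by_cases hvr : v = r
        · subst hvr; exact hrd
        · exact domUt v hv hv' hvr
      · by_cases hus : u ∈ S
        · exact Or.inl (mem_sA_iff.2 ⟨Finset.inter_subset_right,
            Finset.mem_inter.2 ⟨hus, hu⟩, domUsFull hus⟩)
        · have hun : u ∉ S ∩ Us := fun h => hus (Finset.mem_inter.1 h).1
          -- u is dominated from inside S ∩ Us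
          obtain ⟨w, hw, hadj⟩ := hdom u (Finset.mem_union_right _ hu) hus
          have hwUs : w ∈ Us := by
            by_contra hws
            have hwUt : w ∈ Ut := (Finset.mem_union.1 (hpow hw)).resolve_right hws
            exact hrS ((hcross w hwUt u hu hadj).1 ▸ hw)
          refine Or.inr (mem_sB_iff.2 ⟨Finset.inter_subset_right, hun, ?_⟩)
          intro v hv hv'
          by_cases hvu : v = u
          · subst hvu; exact ⟨w, Finset.mem_inter.2 ⟨hw, hwUs⟩, hadj⟩
          · exact domUs' v hv hv' hvu
    · -- S ∩ Ut is a sC-set, and u ∈ S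
      right
      obtain ⟨w, hw, hadj⟩ := hdom r (Finset.mem_union_left _ hr) hrS
      have hwUs : w ∈ Us := by
        by_contra hws
        have hwUt : w ∈ Ut := (Finset.mem_union.1 (hpow hw)).resolve_right hws
        exact hrd ⟨w, Finset.mem_inter.2 ⟨hw, hwUt⟩, hadj⟩
      have hwu : w = u := (hcross r hr w hwUs hadj.symm).2
      have hus : u ∈ S := hwu ▸ hw
      exact ⟨S ∩ Ut, S ∩ Us, ⟨mem_sC_iff.2 ⟨Finset.inter_subset_right, hrn, domUt, hrd⟩,
        mem_sA_iff.2 ⟨Finset.inter_subset_right, Finset.mem_inter.2 ⟨hus, hu⟩,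
          domUsFull hus⟩⟩, hSplit⟩
  · rintro (⟨St, Ss, ⟨hSt, hSs⟩, rfl⟩ | ⟨St, Ss, ⟨hSt, hSs⟩, rfl⟩)
    · obtain ⟨hStU, hrSt, hdomt⟩ := mem_sB_iff.1 hSt
      have hSsU : Ss ⊆ Us := by
        rcases hSs with h | h
        exacts [(mem_sA_iff.1 h).1, (mem_sB_iff.1 h).1]
      have hrSs : r ∉ Ss := fun h => Finset.disjoint_left.1 hd hr (hSsU h)
      refine mem_sB_iff.2 ⟨Finset.union_subset_union hStU hSsU, ?_, ?_⟩
      · intro h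
        rcases Finset.mem_union.1 h with h | h
        exacts [hrSt h, hrSs h]
      · intro v hv hv'
        have hvSt : v ∉ St := fun h => hv' (Finset.mem_union_left _ h)
        have hvSs : v ∉ Ss := fun h => hv' (Finset.mem_union_right _ h)
        rcases Finset.mem_union.1 hv with hvt | hvs
        · obtain ⟨w, hw, hadj⟩ := hdomt v hvt hvSt
          exact ⟨w, Finset.mem_union_left _ hw, hadj⟩
        · rcases hSs with h | h
          · obtain ⟨w, hw, hadj⟩ := (mem_sA_iff.1 h).2.2 v hvs hvSs
            exact ⟨w, Finset.mem_union_right _ hw, hadj⟩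
          · obtain ⟨w, hw, hadj⟩ := (mem_sB_iff.1 h).2.2 v hvs hvSs
            exact ⟨w, Finset.mem_union_right _ hw, hadj⟩
    · obtain ⟨hStU, hrSt, hdomt, hnex⟩ := mem_sC_iff.1 hSt
      obtain ⟨hSsU, huSs, hdoms⟩ := mem_sA_iff.1 hSs
      have hrSs : r ∉ Ss := fun h => Finset.disjoint_left.1 hd hr (hSsU h)
      refine mem_sB_iff.2 ⟨Finset.union_subset_union hStU hSsU, ?_, ?_⟩
      · intro h
        rcases Finset.mem_union.1 h with h | h
        exacts [hrSt h, hrSs h]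
      · intro v hv hv'
        have hvSt : v ∉ St := fun h => hv' (Finset.mem_union_left _ h)
        have hvSs : v ∉ Ss := fun h => hv' (Finset.mem_union_right _ h)
        rcases Finset.mem_union.1 hv with hvt | hvs
        · by_cases hvr : v = r
          · subst hvr
            exact ⟨u, Finset.mem_union_right _ huSs, hru.symm⟩
          · obtain ⟨w, hw, hadj⟩ := hdomt v hvt hvSt hvr
            exact ⟨w, Finset.mem_union_left _ hw, hadj⟩
        · obtain ⟨w, hw, hadj⟩ := hdoms v hvs hvSs
          exact ⟨w, Finset.mem_union_right _ hw, hadj⟩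

lemma decompC (hd : Disjoint Ut Us) (hr : r ∈ Ut) (hu : u ∈ Us)
    (hru : G.Adj r u) (hcross : ∀ x ∈ Ut, ∀ y ∈ Us, G.Adj x y → x = r ∧ y = u) :
    sC G (Ut ∪ Us) r = ((sC G Ut r) ×ˢ (sB G Us u)).image fun p => p.1 ∪ p.2 := by
  ext S
  simp only [Finset.mem_image, Finset.mem_product, Prod.exists]
  constructor
  · intro hS
    obtain ⟨hpow, hrS, hdom, hnex⟩ := mem_sC_iff.1 hS
    have hSplit : S ∩ Ut ∪ S ∩ Us = S := by
      rw [← Finset.inter_union_distrib_left]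
      exact Finset.inter_eq_left.2 hpow
    have hrn : r ∉ S ∩ Ut := fun h => hrS (Finset.mem_inter.1 h).1
    have hrUs : r ∉ Us := Finset.disjoint_left.1 hd hr
    refine ⟨S ∩ Ut, S ∩ Us, ⟨?_, ?_⟩, hSplit⟩
    · refine mem_sC_iff.2 ⟨Finset.inter_subset_right, hrn, ?_, ?_⟩
      · intro v hv hv' hvr
        have hvS : v ∉ S := fun h => hv' (Finset.mem_inter.2 ⟨h, hv⟩)
        obtain ⟨w, hw, hadj⟩ := hdom v (Finset.mem_union_left _ hv) hvS hvr
        have hwUt : w ∈ Ut := by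
          by_contra hwt
          have hwUs : w ∈ Us := (Finset.mem_union.1 (hpow hw)).resolve_left hwt
          exact hvr (hcross v hv w hwUs hadj.symm).1
        exact ⟨w, Finset.mem_inter.2 ⟨hw, hwUt⟩, hadj⟩
      · rintro ⟨w, hw, hadj⟩
        exact hnex ⟨w, (Finset.mem_inter.1 hw).1, hadj⟩
    · have hun : u ∉ S ∩ Us := by
        intro h
        exact hnex ⟨u, (Finset.mem_inter.1 h).1, hru.symm⟩
      refine mem_sB_iff.2 ⟨Finset.inter_subset_right, hun, ?_⟩
      intro v hv hv'
      have hvS : v ∉ S := fun h => hv' (Finset.mem_inter.2 ⟨h, hv⟩)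
      have hvr : v ≠ r := fun h => hrUs (h ▸ hv)
      obtain ⟨w, hw, hadj⟩ := hdom v (Finset.mem_union_right _ hv) hvS hvr
      have hwUs : w ∈ Us := by
        by_contra hws
        have hwUt : w ∈ Ut := (Finset.mem_union.1 (hpow hw)).resolve_right hws
        exact hrS ((hcross w hwUt v hv hadj).1 ▸ hw)
      exact ⟨w, Finset.mem_inter.2 ⟨hw, hwUs⟩, hadj⟩
  · rintro ⟨St, Ss, ⟨hSt, hSs⟩, rfl⟩
    obtain ⟨hStU, hrSt, hdomt, hnex⟩ := mem_sC_iff.1 hSt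
    obtain ⟨hSsU, huSs, hdoms⟩ := mem_sB_iff.1 hSs
    have hrSs : r ∉ Ss := fun h => Finset.disjoint_left.1 hd hr (hSsU h)
    refine mem_sC_iff.2 ⟨Finset.union_subset_union hStU hSsU, ?_, ?_, ?_⟩
    · intro h
      rcases Finset.mem_union.1 h with h | h
      exacts [hrSt h, hrSs h]
    · intro v hv hv' hvr
      have hvSt : v ∉ St := fun h => hv' (Finset.mem_union_left _ h)
      have hvSs : v ∉ Ss := fun h => hv' (Finset.mem_union_right _ h)
      rcases Finset.mem_union.1 hv with hvt | hvs
      · obtain ⟨w, hw, hadj⟩ := hdomt v hvt hvSt hvr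
        exact ⟨w, Finset.mem_union_left _ hw, hadj⟩
      · obtain ⟨w, hw, hadj⟩ := hdoms v hvs hvSs
        exact ⟨w, Finset.mem_union_right _ hw, hadj⟩
    · rintro ⟨w, hw, hadj⟩
      rcases Finset.mem_union.1 hw with hwt | hws
      · exact hnex ⟨w, hwt, hadj⟩
      · have hwUs : w ∈ Us := hSsU hws
        have : w = u := (hcross r hr w hwUs hadj.symm).2
        exact huSs (this ▸ hws)

end Decomp3


section Tree

variable {V : Type*} [Fintype V] {G : SimpleGraph V}

/-- `U` induces a subtree of `G` rooted at `r`: every vertex of `U` is joined to `r`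
by a path staying inside `U`. -/
def Adm (G : SimpleGraph V) (U : Finset V) (r : V) : Prop :=
  r ∈ U ∧ ∀ x ∈ U, ∃ p : G.Walk r x, p.IsPath ∧ ∀ z ∈ p.support, z ∈ U

lemma split (htree : G.IsTree) {U : Finset V} {r : V} (hU : Adm G U r) (h2 : 2 ≤ U.card) :
    ∃ (u : V) (Ut Us : Finset V),
      G.Adj r u ∧ Disjoint Ut Us ∧ Ut ∪ Us = U ∧ r ∈ Ut ∧ u ∈ Us ∧
      Adm G Ut r ∧ Adm G Us u ∧
      (∀ x ∈ Ut, ∀ y ∈ Us, G.Adj x y → x = r ∧ y = u) ∧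
      Ut.card < U.card ∧ Us.card < U.card := by
  obtain ⟨hrU, hadm⟩ := hU
  obtain ⟨x, hxU, hxr⟩ : ∃ x ∈ U, x ≠ r := by
    obtain ⟨a, ha, b, hb, hab⟩ := Finset.one_lt_card.1 h2
    by_cases h : a = r
    · exact ⟨b, hb, fun hh => hab (h.trans hh.symm)⟩
    · exact ⟨a, ha, h⟩
  obtain ⟨p, hp, hps⟩ := hadm x hxU
  obtain ⟨u, hru, huU⟩ : ∃ u, G.Adj r u ∧ u ∈ U := by
    cases p with
    | nil => exact absurd rfl hxr
    | cons h q =>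
        refine ⟨_, h, hps _ ?_⟩
        rw [SimpleGraph.Walk.support_cons]
        exact List.mem_cons_of_mem _ q.start_mem_support
  have hur : u ≠ r := (G.ne_of_adj hru).symm
  set Us : Finset V :=
    U.filter (fun y => ∃ w : G.Walk u y, (∀ z ∈ w.support, z ∈ U) ∧ r ∉ w.support) with hUsdef
  set Ut : Finset V := U \ Us with hUtdef
  have memUs : ∀ y, y ∈ Us ↔ y ∈ U ∧
      ∃ w : G.Walk u y, (∀ z ∈ w.support, z ∈ U) ∧ r ∉ w.support := by
    intro y; rw [hUsdef, Finset.mem_filter]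
  have huUs : u ∈ Us := by
    rw [memUs]
    refine ⟨huU, SimpleGraph.Walk.nil, ?_, ?_⟩
    · intro z hz
      rw [SimpleGraph.Walk.support_nil, List.mem_singleton] at hz
      exact hz ▸ huU
    · rw [SimpleGraph.Walk.support_nil, List.mem_singleton]
      exact fun h => hur h.symm
  have hrnUs : r ∉ Us := by
    rw [memUs]
    rintro ⟨-, w, -, hrw⟩
    exact hrw w.end_mem_support
  have hrUt : r ∈ Ut := Finset.mem_sdiff.2 ⟨hrU, hrnUs⟩
  have hdisj : Disjoint Ut Us := Finset.sdiff_disjoint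
  have hunion : Ut ∪ Us = U := Finset.sdiff_union_of_subset (Finset.filter_subset _ _)
  have cross : ∀ x ∈ Ut, ∀ y ∈ Us, G.Adj x y → x = r ∧ y = u := by
    intro a ha y hy hay
    obtain ⟨hyU, w, hwU, hrw⟩ := (memUs y).1 hy
    have har : a = r := by
      by_contra hne
      have haUs : a ∈ Us := by
        rw [memUs]
        refine ⟨(Finset.mem_sdiff.1 ha).1,
          w.append (SimpleGraph.Walk.cons hay.symm SimpleGraph.Walk.nil), ?_, ?_⟩
        · intro z hz
          rw [SimpleGraph.Walk.support_append] at hz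
          rcases List.mem_append.1 hz with h | h
          · exact hwU z h
          · rw [SimpleGraph.Walk.support_cons, SimpleGraph.Walk.support_nil] at h
            simp only [List.tail_cons, List.mem_singleton] at h
            exact h ▸ (Finset.mem_sdiff.1 ha).1
        · rw [SimpleGraph.Walk.support_append]
          intro h
          rcases List.mem_append.1 h with h | h
          · exact hrw h
          · rw [SimpleGraph.Walk.support_cons, SimpleGraph.Walk.support_nil] at h
            simp only [List.tail_cons, List.mem_singleton] at h
            exact hne h.symm
      exact (Finset.mem_sdiff.1 ha).2 haUs
    rw [har] at hay
    refine ⟨har, ?_⟩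
    by_contra hyu
    have hry : r ≠ y := fun h => hrw (h ▸ w.end_mem_support)
    have hp1 : (SimpleGraph.Walk.cons hru (w.toPath : G.Walk u y)).IsPath := by
      rw [SimpleGraph.Walk.cons_isPath_iff]
      exact ⟨w.toPath.2, fun h => hrw (SimpleGraph.Walk.support_toPath_subset w h)⟩
    have hp2 : (SimpleGraph.Walk.cons hay SimpleGraph.Walk.nil : G.Walk r y).IsPath := by
      rw [SimpleGraph.Walk.cons_isPath_iff]
      refine ⟨SimpleGraph.Walk.IsPath.nil, ?_⟩
      rw [SimpleGraph.Walk.support_nil, List.mem_singleton]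
      exact hry
    have := (htree.existsUnique_path r y).unique hp1 hp2
    have hlen := congrArg SimpleGraph.Walk.length this
    rw [SimpleGraph.Walk.length_cons, SimpleGraph.Walk.length_cons,
      SimpleGraph.Walk.length_nil] at hlen
    have : (w.toPath : G.Walk u y).length = 0 := by omega
    exact hyu (SimpleGraph.Walk.eq_of_length_eq_zero this).symm
  have hAdmUs : Adm G Us u := by
    refine ⟨huUs, fun y hy => ?_⟩
    obtain ⟨hyU, w, hwU, hrw⟩ := (memUs y).1 hy
    refine ⟨w.toPath, w.toPath.2, fun z hz => ?_⟩
    have hzw : z ∈ w.support := SimpleGraph.Walk.support_toPath_subset w hz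
    rw [memUs]
    exact ⟨hwU z hzw, w.takeUntil z hzw,
      fun t ht => hwU t (SimpleGraph.Walk.support_takeUntil_subset w hzw ht),
      fun hr' => hrw (SimpleGraph.Walk.support_takeUntil_subset w hzw hr')⟩
  have hAdmUt : Adm G Ut r := by
    refine ⟨hrUt, fun y hy => ?_⟩
    obtain ⟨p', hp', hp'U⟩ := hadm y (Finset.mem_sdiff.1 hy).1
    refine ⟨p', hp', fun z hz => ?_⟩
    rw [Finset.mem_sdiff]
    refine ⟨hp'U z hz, fun hzUs => ?_⟩
    obtain ⟨hzU, w, hwU, hrw⟩ := (memUs z).1 hzUs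
    have hzr : z ≠ r := fun h => hrnUs (h ▸ hzUs)
    have hnd : r ∉ (p'.dropUntil z hz).support := by
      have hspec := p'.take_spec hz
      have hnodup := hp'.support_nodup
      rw [← hspec, SimpleGraph.Walk.support_append] at hnodup
      have hdisjl := List.disjoint_of_nodup_append hnodup
      intro hrd
      rw [SimpleGraph.Walk.support_eq_cons] at hrd
      rcases List.mem_cons.1 hrd with h | h
      · exact hzr h.symm
      · exact hdisjl (SimpleGraph.Walk.start_mem_support _) h
    have hyUs : y ∈ Us := by
      rw [memUs]
      refine ⟨(Finset.mem_sdiff.1 hy).1, w.append (p'.dropUntil z hz), ?_, ?_⟩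
      · intro t ht
        rw [SimpleGraph.Walk.support_append] at ht
        rcases List.mem_append.1 ht with h | h
        · exact hwU t h
        · exact hp'U t (SimpleGraph.Walk.support_dropUntil_subset p' hz
            (List.mem_of_mem_tail h))
      · rw [SimpleGraph.Walk.support_append]
        intro h
        rcases List.mem_append.1 h with h | h
        · exact hrw h
        · exact hnd (List.mem_of_mem_tail h)
    exact (Finset.mem_sdiff.1 hy).2 hyUs
  have hUsub : Us ⊆ U := Finset.filter_subset _ _
  have hUtsub : Ut ⊆ U := Finset.sdiff_subset
  have hcard1 : Ut.card < U.card :=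
    Finset.card_lt_card ⟨hUtsub, fun hsub =>
      (Finset.mem_sdiff.1 (hsub huU)).2 huUs⟩
  have hcard2 : Us.card < U.card :=
    Finset.card_lt_card ⟨hUsub, fun hsub => hrnUs (hsub hrU)⟩
  exact ⟨u, Ut, Us, hru, hdisj, hunion, hrUt, huUs, hAdmUt, hAdmUs, cross, hcard1, hcard2⟩

end Tree


section Main

variable {V : Type*} [Fintype V] {G : SimpleGraph V}

lemma sub_sA {U : Finset V} {r : V} : ∀ S ∈ sA G U r, S ⊆ U := fun _ h => (mem_sA_iff.1 h).1
lemma sub_sB {U : Finset V} {r : V} : ∀ S ∈ sB G U r, S ⊆ U := fun _ h => (mem_sB_iff.1 h).1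
lemma sub_sC {U : Finset V} {r : V} : ∀ S ∈ sC G U r, S ⊆ U := fun _ h => (mem_sC_iff.1 h).1

lemma tot_union {X Y : Finset (Finset V)} (h : Disjoint X Y) :
    tot (X ∪ Y) = tot X + tot Y := Finset.sum_union h

lemma main_induction (htree : G.IsTree) :
    ∀ N : ℕ, ∀ U : Finset V, U.card ≤ N → ∀ r : V, Adm G U r →
      (Inv (U.card : ℤ) ((sA G U r).card : ℤ) ((sB G U r).card : ℤ) ((sC G U r).card : ℤ)
        (tot (sA G U r)) (tot (sB G U r)) (tot (sC G U r))
      ∧ (2 ≤ U.card →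
          3 * (tot (sA G U r) + tot (sB G U r))
            ≤ 2 * (U.card : ℤ) * (((sA G U r).card : ℤ) + ((sB G U r).card : ℤ)))) := by
  intro N
  induction N with
  | zero =>
      intro U hUN r hadm
      have : 0 < U.card := Finset.card_pos.2 ⟨r, hadm.1⟩
      omega
  | succ N ih =>
      intro U hUN r hadm
      by_cases h2 : 2 ≤ U.card
      · -- inductive step
        obtain ⟨u, Ut, Us, hru, hdisj, hunion, hrUt, huUs, hAdmUt, hAdmUs, hcross, hc1, hc2⟩ :=
          split htree hadm h2
        obtain ⟨invT, -⟩ := ih Ut (by omega) r hAdmUt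
        obtain ⟨invS, -⟩ := ih Us (by omega) u hAdmUs
        have hYsub : ∀ S ∈ sA G Us u ∪ sB G Us u ∪ sC G Us u, S ⊆ Us := by
          intro S hS
          rcases Finset.mem_union.1 hS with h | h
          · rcases Finset.mem_union.1 h with h | h
            exacts [sub_sA S h, sub_sB S h]
          · exact sub_sC S h
        have hYsub2 : ∀ S ∈ sA G Us u ∪ sB G Us u, S ⊆ Us := by
          intro S hS
          rcases Finset.mem_union.1 hS with h | h
          exacts [sub_sA S h, sub_sB S h]
        have hdAB : Disjoint (sA G Us u) (sB G Us u) := disj_sA_sB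
        have hdABC : Disjoint (sA G Us u ∪ sB G Us u) (sC G Us u) :=
          Finset.disjoint_union_left.2 ⟨disj_sA_sC, disj_sB_sC huUs⟩
        have hdImB : Disjoint
            (((sB G Ut r) ×ˢ (sA G Us u ∪ sB G Us u)).image (fun p => p.1 ∪ p.2))
            (((sC G Ut r) ×ˢ (sA G Us u)).image (fun p => p.1 ∪ p.2)) := by
          refine Finset.disjoint_left.2 fun S hS1 hS2 => ?_
          obtain ⟨⟨P1, Q1⟩, hm1, he1⟩ := Finset.mem_image.1 hS1
          obtain ⟨⟨P2, Q2⟩, hm2, he2⟩ := Finset.mem_image.1 hS2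
          simp only [Finset.mem_product] at hm1 hm2
          have e1 : P1 = P2 := by
            have k1 : (P1 ∪ Q1) ∩ Ut = P1 :=
              inter_union_left hdisj (sub_sB _ hm1.1) (hYsub2 _ hm1.2)
            have k2 : (P2 ∪ Q2) ∩ Ut = P2 :=
              inter_union_left hdisj (sub_sC _ hm2.1) (sub_sA _ hm2.2)
            rw [← k1, ← k2]
            simp only at he1 he2
            rw [he1, he2]
          exact Finset.disjoint_left.1 (disj_sB_sC hrUt) hm1.1 (e1 ▸ hm2.1)
        -- structural equalities
        have hAeq : sA G U r = ((sA G Ut r) ×ˢ (sA G Us u ∪ sB G Us u ∪ sC G Us u)).image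
            (fun p => p.1 ∪ p.2) := by
          rw [← hunion]; exact decompA hdisj hrUt huUs hru hcross
        have hBeq : sB G U r
            = ((sB G Ut r) ×ˢ (sA G Us u ∪ sB G Us u)).image (fun p => p.1 ∪ p.2)
              ∪ ((sC G Ut r) ×ˢ (sA G Us u)).image (fun p => p.1 ∪ p.2) := by
          rw [← hunion]; exact decompB hdisj hrUt huUs hru hcross
        have hCeq : sC G U r = ((sC G Ut r) ×ˢ (sB G Us u)).image (fun p => p.1 ∪ p.2) := by
          rw [← hunion]; exact decompC hdisj hrUt huUs hru hcross
        -- auxiliary count equalities for the unions over Us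
        have hU1 : ((sA G Us u ∪ sB G Us u ∪ sC G Us u).card : ℤ)
            = ((sA G Us u).card : ℤ) + ((sB G Us u).card : ℤ) + ((sC G Us u).card : ℤ) := by
          rw [Finset.card_union_of_disjoint hdABC, Finset.card_union_of_disjoint hdAB]
          push_cast; ring
        have hU1t : tot (sA G Us u ∪ sB G Us u ∪ sC G Us u)
            = tot (sA G Us u) + tot (sB G Us u) + tot (sC G Us u) := by
          rw [tot_union hdABC, tot_union hdAB]
        have hU2 : ((sA G Us u ∪ sB G Us u).card : ℤ)
            = ((sA G Us u).card : ℤ) + ((sB G Us u).card : ℤ) := by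
          rw [Finset.card_union_of_disjoint hdAB]; push_cast; ring
        have hU2t : tot (sA G Us u ∪ sB G Us u) = tot (sA G Us u) + tot (sB G Us u) := by
          rw [tot_union hdAB]
        -- the six count equalities
        have en : ((U.card : ℤ)) = (Ut.card : ℤ) + (Us.card : ℤ) := by
          rw [← hunion, Finset.card_union_of_disjoint hdisj]; push_cast; ring
        have ea : ((sA G U r).card : ℤ)
            = ((sA G Ut r).card : ℤ) * (((sA G Us u).card : ℤ)
              + ((sB G Us u).card : ℤ) + ((sC G Us u).card : ℤ)) := by
          rw [hAeq, card_image_union hdisj sub_sA hYsub, hU1]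
        have eA : tot (sA G U r)
            = tot (sA G Ut r) * (((sA G Us u).card : ℤ) + ((sB G Us u).card : ℤ)
                + ((sC G Us u).card : ℤ))
              + ((sA G Ut r).card : ℤ)
                * (tot (sA G Us u) + tot (sB G Us u) + tot (sC G Us u)) := by
          rw [hAeq, tot_image_union hdisj sub_sA hYsub, hU1, hU1t]
        have eb : ((sB G U r).card : ℤ)
            = ((sB G Ut r).card : ℤ) * (((sA G Us u).card : ℤ) + ((sB G Us u).card : ℤ))
              + ((sC G Ut r).card : ℤ) * ((sA G Us u).card : ℤ) := by
          have h0 : (sB G U r).card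
              = (((sB G Ut r) ×ˢ (sA G Us u ∪ sB G Us u)).image (fun p => p.1 ∪ p.2)).card
                + (((sC G Ut r) ×ˢ (sA G Us u)).image (fun p => p.1 ∪ p.2)).card := by
            rw [hBeq, Finset.card_union_of_disjoint hdImB]
          have h1 : ((sB G U r).card : ℤ)
              = ((((sB G Ut r) ×ˢ (sA G Us u ∪ sB G Us u)).image
                  (fun p => p.1 ∪ p.2)).card : ℤ)
                + ((((sC G Ut r) ×ˢ (sA G Us u)).image (fun p => p.1 ∪ p.2)).card : ℤ) := by
            exact_mod_cast h0
          rw [h1, card_image_union hdisj sub_sB hYsub2, card_image_union hdisj sub_sC sub_sA,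
            hU2]
        have eB : tot (sB G U r)
            = tot (sB G Ut r) * (((sA G Us u).card : ℤ) + ((sB G Us u).card : ℤ))
              + ((sB G Ut r).card : ℤ) * (tot (sA G Us u) + tot (sB G Us u))
              + tot (sC G Ut r) * ((sA G Us u).card : ℤ)
              + ((sC G Ut r).card : ℤ) * tot (sA G Us u) := by
          rw [hBeq, tot_union hdImB, tot_image_union hdisj sub_sB hYsub2,
            tot_image_union hdisj sub_sC sub_sA, hU2, hU2t]
          ring
        have ec : ((sC G U r).card : ℤ)
            = ((sC G Ut r).card : ℤ) * ((sB G Us u).card : ℤ) := by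
          rw [hCeq, card_image_union hdisj sub_sC sub_sB]
        have eC : tot (sC G U r)
            = tot (sC G Ut r) * ((sB G Us u).card : ℤ)
              + ((sC G Ut r).card : ℤ) * tot (sB G Us u) := by
          rw [hCeq, tot_image_union hdisj sub_sC sub_sB]
        have KEY := inv_attach invT invS
        have KEY2 := inv_goal invT invS
        constructor
        · rw [en, ea, eb, ec, eA, eB, eC]
          exact KEY
        · intro _
          rw [en, ea, eb, eA, eB]
          linarith [KEY2]
      · -- base case : U = {r}
        have h1 : U.card = 1 := by
          have : 0 < U.card := Finset.card_pos.2 ⟨r, hadm.1⟩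
          omega
        have hU : U = {r} := by
          obtain ⟨x, hx⟩ := Finset.card_eq_one.1 h1
          have hr' : r ∈ ({x} : Finset V) := hx ▸ hadm.1
          rw [Finset.mem_singleton] at hr'
          rw [hx, hr']
        subst hU
        refine ⟨base_case G r, fun h => ?_⟩
        rw [Finset.card_singleton] at h
        omega

end Main


section Final

variable {V : Type*} [Fintype V] {G : SimpleGraph V}

lemma univ_mem_domSets : (Finset.univ : Finset V) ∈ domSets G := by
  rw [domSets, Finset.mem_filter]
  exact ⟨Finset.mem_univ _, fun v hv => absurd (Finset.mem_univ v) hv⟩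

lemma domSets_eq (r : V) :
    domSets G = sA G Finset.univ r ∪ sB G Finset.univ r := by
  ext S
  rw [Finset.mem_union, mem_sA_iff, mem_sB_iff, domSets, Finset.mem_filter]
  constructor
  · rintro ⟨-, hdom⟩
    by_cases hr : r ∈ S
    · exact Or.inl ⟨Finset.subset_univ S, hr, fun v _ hv => hdom v hv⟩
    · exact Or.inr ⟨Finset.subset_univ S, hr, fun v _ hv => hdom v hv⟩
  · rintro (⟨-, -, hdom⟩ | ⟨-, -, hdom⟩) <;>
      exact ⟨Finset.mem_univ _, fun v hv => hdom v (Finset.mem_univ v) hv⟩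

end Final

end AvdAux

/-- If `G` is a tree of order `n ≥ 2`, then `avd G ≤ 2n/3`. -/
theorem avd_tree_le {V : Type*} [Fintype V] (G : SimpleGraph V)
    (htree : G.IsTree) (hn : 2 ≤ Fintype.card V) :
    avd G ≤ 2 * (Fintype.card V : ℚ) / 3 := by
  have hne : Nonempty V := Fintype.card_pos_iff.1 (by omega)
  obtain ⟨r⟩ := hne
  have hadm : AvdAux.Adm G Finset.univ r := by
    refine ⟨Finset.mem_univ r, fun x _ => ?_⟩
    obtain ⟨w⟩ := htree.isConnected.preconnected r x
    exact ⟨w.toPath, w.toPath.2, fun z _ => Finset.mem_univ z⟩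
  have hcardU : (Finset.univ : Finset V).card = Fintype.card V := Finset.card_univ
  obtain ⟨-, hgoal⟩ :=
    AvdAux.main_induction htree (Finset.univ : Finset V).card Finset.univ le_rfl r hadm
  have hgoal' := hgoal (by rw [hcardU]; exact hn)
  have hdisj : Disjoint (AvdAux.sA G Finset.univ r) (AvdAux.sB G Finset.univ r) :=
    AvdAux.disj_sA_sB
  have hdcard : ((domSets G).card : ℤ)
      = ((AvdAux.sA G Finset.univ r).card : ℤ) + ((AvdAux.sB G Finset.univ r).card : ℤ) := by
    rw [AvdAux.domSets_eq r, Finset.card_union_of_disjoint hdisj]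
    push_cast; ring
  have hdtot : AvdAux.tot (domSets G)
      = AvdAux.tot (AvdAux.sA G Finset.univ r) + AvdAux.tot (AvdAux.sB G Finset.univ r) := by
    rw [AvdAux.domSets_eq r, AvdAux.tot_union hdisj]
  have hZ : 3 * AvdAux.tot (domSets G)
      ≤ 2 * (Fintype.card V : ℤ) * ((domSets G).card : ℤ) := by
    rw [hdtot, hdcard, show ((Fintype.card V : ℤ)) = (((Finset.univ : Finset V).card : ℕ) : ℤ)
      from by rw [hcardU]]
    exact hgoal'
  have hpos : 0 < ((domSets G).card : ℚ) := by
    have : 0 < (domSets G).card := Finset.card_pos.2 ⟨Finset.univ, AvdAux.univ_mem_domSets⟩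
    exact_mod_cast this
  rw [avd, div_le_div_iff₀ hpos (by norm_num : (0:ℚ) < 3)]
  have e1 : (∑ S ∈ domSets G, ((S.card : ℚ))) = ((AvdAux.tot (domSets G) : ℤ) : ℚ) := by
    rw [AvdAux.tot]; push_cast; rfl
  rw [e1]
  have e2 : ((domSets G).card : ℚ) = (((domSets G).card : ℤ) : ℚ) := by push_cast; rfl
  rw [e2]
  have hZ' : AvdAux.tot (domSets G) * 3
      ≤ 2 * (Fintype.card V : ℤ) * ((domSets G).card : ℤ) := by linarith
  exact_mod_cast hZ'
end

section
/- Let G be a graph of order n and let w be a support vertex of G whose set of leaf neighbors is L_G(w) = {v_1, …, v_t} with t ≥ 1. Let H be the induced subgraph of G on V(G) ∖ (L_G(w) ∪ {w}). Suppose every vertex of N_G(w) ∖ L_G(w) is a support vertex of G, and suppose 3·(Σ_{S∈𝒟(H)} |S|) ≤ 2(n−t−1)·|𝒟(H)|. Then 3·(Σ_{S∈𝒟(G)} |S|) ≤ 2n·|𝒟(G)|. -/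
open scoped Classical

lemma sum_powerset_card_aux {α : Type*} [DecidableEq α] (s : Finset α) :
    2 * ∑ A ∈ s.powerset, A.card = s.card * 2 ^ s.card := by
  induction s using Finset.induction_on with
  | empty => simp
  | @insert a s ha ih =>
    have hdisj : Disjoint s.powerset (s.powerset.image (insert a)) := by
      rw [Finset.disjoint_right]
      intro A hA hA'
      obtain ⟨B, hB, rfl⟩ := Finset.mem_image.mp hA
      have := Finset.mem_powerset.mp hA'
      exact ha (this (Finset.mem_insert_self a B))
    have hinj : Set.InjOn (insert a) (s.powerset : Set (Finset α)) := by
      intro A hA B hB hAB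
      replace hA := Finset.mem_coe.mp hA; replace hB := Finset.mem_coe.mp hB
      have hA' := Finset.mem_powerset.mp hA
      have hB' := Finset.mem_powerset.mp hB
      apply Finset.ext; intro x
      constructor <;> intro hx
      · have : x ∈ insert a B := hAB ▸ Finset.mem_insert_of_mem hx
        rcases Finset.mem_insert.mp this with rfl | h
        · exact absurd (hA' hx) ha
        · exact h
      · have : x ∈ insert a A := hAB ▸ Finset.mem_insert_of_mem hx
        rcases Finset.mem_insert.mp this with rfl | h
        · exact absurd (hB' hx) ha
        · exact h
    rw [Finset.powerset_insert, Finset.sum_union hdisj,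
      Finset.sum_image (fun x hx y hy h => hinj hx hy h)]
    have hcard : ∀ A ∈ s.powerset, (insert a A).card = A.card + 1 := by
      intro A hA
      exact Finset.card_insert_of_notMem (fun h => ha (Finset.mem_powerset.mp hA h))
    rw [Finset.sum_congr rfl hcard, Finset.sum_add_distrib, Finset.sum_const,
      Finset.card_powerset, Finset.card_insert_of_notMem ha]
    ring_nf
    omega

/-- Let `w` be a support vertex of `G` with exactly `t ≥ 1` leaf neighbors, let `H` be the
induced subgraph on the complement of the leaf neighbors of `w` together with `w`, and
suppose every non-leaf neighbor of `w` is a support vertex of `G`.  If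
`3·Σ_{S∈𝒟(H)}|S| ≤ 2(n−t−1)·|𝒟(H)|`, then `3·Σ_{S∈𝒟(G)}|S| ≤ 2n·|𝒟(G)|`. -/
theorem support_vertex_ineq {V : Type*} [Fintype V] (G : SimpleGraph V) (w : V)
    (t : ℕ) (ht : 1 ≤ t) (hcard : (leafNbrSet G w).ncard = t)
    (hsupp : ∀ u ∈ G.neighborSet w \ leafNbrSet G w, IsSupport G u)
    (hH : 3 * (∑ S ∈ domSets (G.induce ((leafNbrSet G w ∪ {w})ᶜ)), (S.card : ℤ))
        ≤ 2 * ((Fintype.card V : ℤ) - t - 1)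
            * ((domSets (G.induce ((leafNbrSet G w ∪ {w})ᶜ))).card : ℤ)) :
    3 * (∑ S ∈ domSets G, (S.card : ℤ))
      ≤ 2 * (Fintype.card V : ℤ) * ((domSets G).card : ℤ) := by
  classical
  set P : Set V := (leafNbrSet G w ∪ {w})ᶜ with hPdef
  have hmemP : ∀ x : V, x ∈ P ↔ x ∉ leafNbrSet G w ∧ x ≠ w := by
    intro x
    simp only [hPdef, Set.mem_compl_iff, Set.mem_union, Set.mem_singleton_iff, not_or]
  -- leaf uniqueness of neighbor
  have leaf_unique : ∀ v a b : V, IsLeaf G v → G.Adj v a → G.Adj v b → a = b := by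
    intro v a b hv hva hvb
    have h1 : (G.neighborFinset v).card = 1 := by
      rwa [SimpleGraph.card_neighborFinset_eq_degree]
    obtain ⟨x, hx⟩ := Finset.card_eq_one.mp h1
    have ha : a ∈ G.neighborFinset v := by rwa [SimpleGraph.mem_neighborFinset]
    have hb : b ∈ G.neighborFinset v := by rwa [SimpleGraph.mem_neighborFinset]
    rw [hx, Finset.mem_singleton] at ha hb
    rw [ha, hb]
  obtain ⟨v₁, hv₁⟩ : (leafNbrSet G w).Nonempty := by
    apply Set.nonempty_of_ncard_ne_zero; omega
  have hv₁' : G.Adj w v₁ ∧ IsLeaf G v₁ := hv₁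
  set Lf : Finset V := (leafNbrSet G w).toFinset with hLfdef
  have hLf : ∀ x, x ∈ Lf ↔ x ∈ leafNbrSet G w := fun x => Set.mem_toFinset
  have hLfcard : Lf.card = t := by
    rw [hLfdef, ← Set.ncard_eq_toFinset_card', hcard]
  have hwLf : w ∉ Lf := by
    rw [hLf]; intro h; exact G.loopless.irrefl w h.1
  -- the embedding of the subtype
  set e : ↥P ↪ V := Function.Embedding.subtype _ with hedef
  have hmape : ∀ (T : Finset ↥P) (x : V), x ∈ T.map e ↔ ∃ a ∈ T, (a : V) = x := by
    intro T x; simp [hedef]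
  have hmapeP : ∀ (T : Finset ↥P) (x : V), x ∈ T.map e → x ∈ P := by
    intro T x hx; obtain ⟨a, _, rfl⟩ := (hmape T x).mp hx; exact a.2
  -- adjacency in the induced graph
  have hHadj : ∀ a b : ↥P, (G.induce P).Adj a b ↔ G.Adj ↑a ↑b := by
    intro a b; simp [SimpleGraph.induce]
  have hdomG : ∀ S : Finset V, S ∈ domSets G ↔ ∀ v ∉ S, ∃ u ∈ S, G.Adj u v := by
    intro S; simp [domSets]
  have hdomH : ∀ T : Finset ↥P,
      T ∈ domSets (G.induce P) ↔ ∀ v ∉ T, ∃ u ∈ T, G.Adj ↑u ↑v := by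
    intro T
    simp only [domSets, Finset.mem_filter, Finset.mem_univ, true_and]
    constructor
    · intro h v hv; obtain ⟨u, hu, hadj⟩ := h v hv; exact ⟨u, hu, (hHadj u v).mp hadj⟩
    · intro h v hv; obtain ⟨u, hu, hadj⟩ := h v hv; exact ⟨u, hu, (hHadj u v).mpr hadj⟩
  -- Key lemma: the trace of a dominating set of G on P is dominating in H
  have keyA : ∀ S ∈ domSets G, S.subtype (· ∈ P) ∈ domSets (G.induce P) := by
    intro S hS
    rw [hdomH]
    intro v hv
    have hvS : (v : V) ∉ S := by
      intro h; exact hv (Finset.mem_subtype.mpr h)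
    obtain ⟨x, hxS, hadj⟩ := (hdomG S).mp hS (v : V) hvS
    have hvP := (hmemP (v : V)).mp v.2
    by_cases hxP : x ∈ P
    · refine ⟨⟨x, hxP⟩, Finset.mem_subtype.mpr hxS, hadj⟩
    · rcases (not_and_or.mp (fun hc => hxP ((hmemP x).mpr hc))) with hL | hw
      · -- x is a leaf neighbor of w
        rw [not_not] at hL
        exact absurd (leaf_unique x w (v : V) hL.2 hL.1.symm hadj) hvP.2.symm
      · rw [not_not] at hw
        rw [hw] at hadj hxS
        -- x = w : v is a non-leaf neighbor of w, hence a support vertex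
        obtain ⟨ℓ, hvℓ, hℓ⟩ := hsupp (v : V) ⟨(SimpleGraph.mem_neighborSet G w (v : V)).mpr hadj, hvP.1⟩
        have hℓw : ℓ ≠ w := by
          intro heq
          rw [heq] at hℓ
          have := leaf_unique w (v : V) v₁ hℓ hadj hv₁'.1
          exact hvP.1 (this ▸ hv₁)
        have hℓL : ℓ ∉ leafNbrSet G w := by
          intro h
          exact hvP.2 (leaf_unique ℓ (v : V) w h.2 hvℓ.symm h.1.symm)
        have hℓP : ℓ ∈ P := (hmemP ℓ).mpr ⟨hℓL, hℓw⟩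
        have hℓS : ℓ ∈ S := by
          by_contra hns
          obtain ⟨y, hyS, hy⟩ := (hdomG S).mp hS ℓ hns
          have : y = (v : V) := leaf_unique ℓ y (v : V) hℓ hy.symm hvℓ.symm
          exact hvS (this ▸ hyS)
        exact ⟨⟨ℓ, hℓP⟩, Finset.mem_subtype.mpr hℓS, hvℓ.symm⟩
  -- the two families
  set f : Finset V × Finset ↥P → Finset V := fun p => insert w (p.1 ∪ p.2.map e) with hfdef
  set g : Finset ↥P → Finset V := fun T => Lf ∪ T.map e with hgdef
  set DH : Finset (Finset ↥P) := domSets (G.induce P) with hDHdef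
  have hsplit : domSets G = (Lf.powerset ×ˢ DH).image f ∪ DH.image g := by
    apply Finset.ext; intro S
    constructor
    · intro hS
      have hT := keyA S hS
      by_cases hw : w ∈ S
      · apply Finset.mem_union_left
        apply Finset.mem_image.mpr
        refine ⟨(S ∩ Lf, S.subtype (· ∈ P)), Finset.mem_product.mpr
          ⟨Finset.mem_powerset.mpr Finset.inter_subset_right, hT⟩, ?_⟩
        apply Finset.ext; intro x
        simp only [hfdef, Finset.mem_insert, Finset.mem_union, Finset.mem_inter]
        constructor
        · rintro (rfl | ⟨hx, _⟩ | hx)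
          · exact hw
          · exact hx
          · obtain ⟨a, ha, rfl⟩ := (hmape _ x).mp hx
            exact Finset.mem_subtype.mp ha
        · intro hxS
          by_cases hxP : x ∈ P
          · exact Or.inr (Or.inr ((hmape _ x).mpr ⟨⟨x, hxP⟩, Finset.mem_subtype.mpr hxS, rfl⟩))
          · rcases (not_and_or.mp (fun hc => hxP ((hmemP x).mpr hc))) with hL | hxw
            · rw [not_not] at hL
              exact Or.inr (Or.inl ⟨hxS, (hLf x).mpr hL⟩)
            · rw [not_not] at hxw; exact Or.inl hxw
      · apply Finset.mem_union_right
        apply Finset.mem_image.mpr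
        refine ⟨S.subtype (· ∈ P), hT, ?_⟩
        have hLsub : Lf ⊆ S := by
          intro v hv
          rw [hLf] at hv
          by_contra hns
          obtain ⟨y, hyS, hy⟩ := (hdomG S).mp hS v hns
          have : y = w := leaf_unique v y w hv.2 hy.symm hv.1.symm
          exact hw (this ▸ hyS)
        apply Finset.ext; intro x
        simp only [hgdef, Finset.mem_union]
        constructor
        · rintro (hx | hx)
          · exact hLsub hx
          · obtain ⟨a, ha, rfl⟩ := (hmape _ x).mp hx
            exact Finset.mem_subtype.mp ha
        · intro hxS
          by_cases hxP : x ∈ P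
          · exact Or.inr ((hmape _ x).mpr ⟨⟨x, hxP⟩, Finset.mem_subtype.mpr hxS, rfl⟩)
          · rcases (not_and_or.mp (fun hc => hxP ((hmemP x).mpr hc))) with hL | hxw
            · rw [not_not] at hL
              exact Or.inl ((hLf x).mpr hL)
            · rw [not_not] at hxw; subst hxw; exact absurd hxS hw
    · intro hS
      rcases Finset.mem_union.mp hS with hS | hS
      · obtain ⟨⟨A, T⟩, hmem, rfl⟩ := Finset.mem_image.mp hS
        obtain ⟨hA, hT⟩ := Finset.mem_product.mp hmem
        rw [hdomG]
        intro v hv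
        simp only [hfdef, Finset.mem_insert, Finset.mem_union, not_or] at hv
        obtain ⟨hvw, hvA, hvT⟩ := hv
        by_cases hvP : v ∈ P
        · have hvT' : (⟨v, hvP⟩ : ↥P) ∉ T := by
            intro h; exact hvT ((hmape _ v).mpr ⟨⟨v, hvP⟩, h, rfl⟩)
          obtain ⟨u, hu, hadj⟩ := (hdomH T).mp hT ⟨v, hvP⟩ hvT'
          refine ⟨(u : V), ?_, hadj⟩
          simp only [hfdef, Finset.mem_insert, Finset.mem_union]
          exact Or.inr (Or.inr ((hmape _ _).mpr ⟨u, hu, rfl⟩))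
        · rcases (not_and_or.mp (fun hc => hvP ((hmemP v).mpr hc))) with hL | hvw'
          · rw [not_not] at hL
            exact ⟨w, Finset.mem_insert_self _ _, hL.1⟩
          · rw [not_not] at hvw'; exact absurd hvw' hvw
      · obtain ⟨T, hT, rfl⟩ := Finset.mem_image.mp hS
        rw [hdomG]
        intro v hv
        simp only [hgdef, Finset.mem_union, not_or] at hv
        obtain ⟨hvL, hvT⟩ := hv
        by_cases hvP : v ∈ P
        · have hvT' : (⟨v, hvP⟩ : ↥P) ∉ T := by
            intro h; exact hvT ((hmape _ v).mpr ⟨⟨v, hvP⟩, h, rfl⟩)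
          obtain ⟨u, hu, hadj⟩ := (hdomH T).mp hT ⟨v, hvP⟩ hvT'
          refine ⟨(u : V), ?_, hadj⟩
          simp only [hgdef, Finset.mem_union]
          exact Or.inr ((hmape _ _).mpr ⟨u, hu, rfl⟩)
        · rcases (not_and_or.mp (fun hc => hvP ((hmemP v).mpr hc))) with hL | hvw'
          · rw [not_not] at hL
            exact absurd ((hLf v).mpr hL) hvL
          · rw [not_not] at hvw'; subst hvw'
            refine ⟨v₁, Finset.mem_union_left _ ((hLf v₁).mpr hv₁), hv₁'.1.symm⟩
  -- disjointness
  have hwmap : ∀ T : Finset ↥P, w ∉ T.map e := by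
    intro T h
    exact ((hmemP w).mp (hmapeP T w h)).2 rfl
  have hLfP : ∀ x ∈ Lf, x ∉ P := by
    intro x hx hxP; exact ((hmemP x).mp hxP).1 ((hLf x).mp hx)
  have hdisjLm : ∀ (A : Finset V), A ⊆ Lf → ∀ T : Finset ↥P, Disjoint A (T.map e) := by
    intro A hA T
    rw [Finset.disjoint_left]
    intro x hx hx'
    exact hLfP x (hA hx) (hmapeP T x hx')
  have hdisj : Disjoint ((Lf.powerset ×ˢ DH).image f) (DH.image g) := by
    rw [Finset.disjoint_left]
    intro S hS hS'
    obtain ⟨p, _, rfl⟩ := Finset.mem_image.mp hS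
    obtain ⟨T, _, hTe⟩ := Finset.mem_image.mp hS'
    have hw1 : w ∈ f p := Finset.mem_insert_self _ _
    rw [← hTe] at hw1
    rcases Finset.mem_union.mp hw1 with h | h
    · exact hwLf h
    · exact hwmap T h
  -- injectivity
  have hmape' : ∀ (T : Finset ↥P) (a : ↥P), (a : V) ∈ T.map e ↔ a ∈ T := by
    intro T a
    constructor
    · intro h
      obtain ⟨b, hb, hba⟩ := (hmape T _).mp h
      rwa [← Subtype.ext hba]
    · intro h; exact (hmape T _).mpr ⟨a, h, rfl⟩
  have hfinj : ∀ p ∈ Lf.powerset ×ˢ DH, ∀ q ∈ Lf.powerset ×ˢ DH, f p = f q → p = q := by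
    intro p hp q hq hfq
    obtain ⟨hp1, _⟩ := Finset.mem_product.mp hp
    obtain ⟨hq1, _⟩ := Finset.mem_product.mp hq
    rw [Finset.mem_powerset] at hp1 hq1
    have hmemf : ∀ (r : Finset V × Finset ↥P), r.1 ⊆ Lf → ∀ x,
        (x ∈ f r ↔ x = w ∨ x ∈ r.1 ∨ x ∈ r.2.map e) := by
      intro r hr x
      simp only [hfdef, Finset.mem_insert, Finset.mem_union]
    have hAB : ∀ (r r' : Finset V × Finset ↥P), r.1 ⊆ Lf → r'.1 ⊆ Lf → f r = f r' →
        r.1 ⊆ r'.1 ∧ r.2 ⊆ r'.2 := by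
      intro r r' hr hr' heq
      constructor
      · intro x hx
        have hxf : x ∈ f r' := heq ▸ ((hmemf r hr x).mpr (Or.inr (Or.inl hx)))
        rcases (hmemf r' hr' x).mp hxf with hxw | hx' | hx'
        · exact absurd (hr hx) (hxw ▸ hwLf)
        · exact hx'
        · exact absurd (hmapeP _ x hx') (hLfP x (hr hx))
      · intro a ha
        have hxf : (a : V) ∈ f r' := heq ▸ ((hmemf r hr _).mpr (Or.inr (Or.inr ((hmape' _ a).mpr ha))))
        rcases (hmemf r' hr' _).mp hxf with h | h | h
        · exact absurd (h ▸ a.2) (fun hc => ((hmemP w).mp hc).2 rfl)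
        · exact absurd a.2 (hLfP _ (hr' h))
        · exact (hmape' _ a).mp h
    obtain ⟨h1, h2⟩ := hAB p q hp1 hq1 hfq
    obtain ⟨h3, h4⟩ := hAB q p hq1 hp1 hfq.symm
    exact Prod.ext (Finset.Subset.antisymm h1 h3) (Finset.Subset.antisymm h2 h4)
  have hginj : ∀ T ∈ DH, ∀ T' ∈ DH, g T = g T' → T = T' := by
    intro T _ T' _ heq
    have key : ∀ (A B : Finset ↥P), g A = g B → A ⊆ B := by
      intro A B h a ha
      have : (a : V) ∈ g B := h ▸ Finset.mem_union_right _ ((hmape' A a).mpr ha)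
      rcases Finset.mem_union.mp this with h' | h'
      · exact absurd a.2 (hLfP _ h')
      · exact (hmape' B a).mp h'
    exact Finset.Subset.antisymm (key T T' heq) (key T' T heq.symm)
  -- cardinalities of individual sets
  have hcardf : ∀ p ∈ Lf.powerset ×ˢ DH, (f p).card = 1 + p.1.card + p.2.card := by
    intro p hp
    obtain ⟨hp1, _⟩ := Finset.mem_product.mp hp
    rw [Finset.mem_powerset] at hp1
    have hwp : w ∉ p.1 ∪ p.2.map e := by
      rw [Finset.mem_union]
      rintro (h | h)
      · exact hwLf (hp1 h)
      · exact hwmap _ h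
    rw [hfdef]
    simp only
    rw [Finset.card_insert_of_notMem hwp, Finset.card_union_of_disjoint (hdisjLm p.1 hp1 p.2),
      Finset.card_map]
    omega
  have hcardg : ∀ T ∈ DH, (g T).card = t + T.card := by
    intro T _
    rw [hgdef]
    simp only
    rw [Finset.card_union_of_disjoint (hdisjLm Lf Finset.Subset.rfl T), Finset.card_map, hLfcard]
  -- natural number counts
  set dN : ℕ := DH.card with hdN
  set sN : ℕ := ∑ T ∈ DH, T.card with hsN
  set qN : ℕ := ∑ A ∈ Lf.powerset, A.card with hqN
  have hq2 : 2 * qN = t * 2 ^ t := by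
    have := sum_powerset_card_aux Lf
    rwa [hLfcard] at this
  have hcardG : (domSets G).card = 2 ^ t * dN + dN := by
    rw [hsplit, Finset.card_union_of_disjoint hdisj, Finset.card_image_of_injOn hfinj,
      Finset.card_image_of_injOn hginj, Finset.card_product, Finset.card_powerset, hLfcard]
  have hsumG : ∑ S ∈ domSets G, S.card
      = (2 ^ t * dN + qN * dN + 2 ^ t * sN) + (t * dN + sN) := by
    rw [hsplit, Finset.sum_union hdisj, Finset.sum_image hfinj, Finset.sum_image hginj,
      Finset.sum_congr rfl hcardf, Finset.sum_congr rfl hcardg]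
    rw [Finset.sum_product]
    have hinner : ∀ A ∈ Lf.powerset, ∑ T ∈ DH, (1 + A.card + T.card)
        = (1 + A.card) * dN + sN := by
      intro A _
      rw [Finset.sum_add_distrib, Finset.sum_const, smul_eq_mul, ← hsN, hdN]
      ring
    rw [Finset.sum_congr rfl hinner, Finset.sum_add_distrib, Finset.sum_const,
      ← Finset.sum_mul, Finset.sum_add_distrib, Finset.sum_const, Finset.card_powerset,
      hLfcard, Finset.sum_add_distrib, Finset.sum_const, ← hqN]
    simp only [smul_eq_mul, mul_one]
    ring
  -- pass to the integers
  have hC : ((domSets G).card : ℤ) = 2 ^ t * dN + dN := by exact_mod_cast congrArg Nat.cast hcardG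
  have hS : (∑ S ∈ domSets G, (S.card : ℤ))
      = (2 ^ t * dN + qN * dN + 2 ^ t * sN) + (t * dN + sN) := by
    have : (∑ S ∈ domSets G, (S.card : ℤ)) = ((∑ S ∈ domSets G, S.card : ℕ) : ℤ) := by
      push_cast; rfl
    rw [this, hsumG]; push_cast; ring
  have hHs : (∑ T ∈ DH, (T.card : ℤ)) = (sN : ℤ) := by
    rw [hsN]; push_cast; rfl
  rw [hHs] at hH
  rw [hC, hS]
  set n : ℤ := (Fintype.card V : ℤ) with hn
  have hd0 : (0 : ℤ) ≤ (dN : ℤ) := Int.natCast_nonneg _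
  have hfac : (0 : ℤ) ≤ ((t : ℤ) - 2) * ((2 : ℤ) ^ t - 2) := by
    rcases Nat.lt_or_ge t 2 with h | h
    · interval_cases t
      · norm_num
    · have h1 : (2 : ℤ) ≤ (t : ℤ) := by exact_mod_cast h
      have h2 : (2 : ℤ) ≤ (2 : ℤ) ^ t := by
        calc (2 : ℤ) = 2 ^ 1 := by norm_num
        _ ≤ 2 ^ t := pow_le_pow_right₀ (by norm_num) ht
      exact mul_nonneg (by linarith) (by linarith)
  have hfacd := mul_nonneg hfac hd0
  have hq2' : (2 : ℤ) * (qN : ℤ) = (t : ℤ) * 2 ^ t := by exact_mod_cast congrArg Nat.cast hq2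
  have hq2d : (2 : ℤ) * (qN : ℤ) * (dN : ℤ) = (t : ℤ) * 2 ^ t * (dN : ℤ) := by
    rw [hq2']
  have hp0 : (0 : ℤ) ≤ (2 : ℤ) ^ t + 1 := by positivity
  have hkey := mul_le_mul_of_nonneg_left hH hp0
  nlinarith [hkey, hfacd, hq2d, hd0]
end

section
/- Let G be a graph of order n and let w be a support vertex of G whose set of leaf neighbors is L_G(w) = {v_1, …, v_t} with t ≥ 1. Let H be the induced subgraph of G on V(G) ∖ (L_G(w) ∪ {w}). Suppose every vertex of N_G(w) ∖ L_G(w) is a support vertex of G, and suppose 3·(Σ_{S∈𝒟(H)} |S|) ≤ 2(n−t−1)·|𝒟(H)|. Then 3·(Σ_{S∈𝒟(G)} |S|) = 2n·|𝒟(G)| holds if and only if t ∈ {1, 2} and 3·(Σ_{S∈𝒟(H)} |S|) = 2(n−t−1)·|𝒟(H)|. -/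
open scoped Classical

/-- In the setting of the support-vertex lemma, equality `3·Σ_{S∈𝒟(G)}|S| = 2n·|𝒟(G)|`
holds if and only if `t ∈ {1,2}` and `3·Σ_{S∈𝒟(H)}|S| = 2(n−t−1)·|𝒟(H)|`. -/
theorem support_vertex_eq_iff {V : Type*} [Fintype V] (G : SimpleGraph V) (w : V)
    (t : ℕ) (ht : 1 ≤ t) (hcard : (leafNbrSet G w).ncard = t)
    (hsupp : ∀ u ∈ G.neighborSet w \ leafNbrSet G w, IsSupport G u)
    (hH : 3 * (∑ S ∈ domSets (G.induce ((leafNbrSet G w ∪ {w})ᶜ)), (S.card : ℤ))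
        ≤ 2 * ((Fintype.card V : ℤ) - t - 1)
            * ((domSets (G.induce ((leafNbrSet G w ∪ {w})ᶜ))).card : ℤ)) :
    3 * (∑ S ∈ domSets G, (S.card : ℤ))
        = 2 * (Fintype.card V : ℤ) * ((domSets G).card : ℤ) ↔
      (t = 1 ∨ t = 2) ∧
        3 * (∑ S ∈ domSets (G.induce ((leafNbrSet G w ∪ {w})ᶜ)), (S.card : ℤ))
          = 2 * ((Fintype.card V : ℤ) - t - 1)
              * ((domSets (G.induce ((leafNbrSet G w ∪ {w})ᶜ))).card : ℤ) := by
  classical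
  set Kc : Set V := (leafNbrSet G w ∪ {w})ᶜ with hKc
  set H : SimpleGraph ↥Kc := G.induce Kc with hHdef
  -- membership in Kc
  have hKcmem : ∀ x : V, x ∈ Kc ↔ (x ∉ leafNbrSet G w ∧ x ≠ w) := by
    intro x; simp [hKc]; tauto
  -- leaves of w and their unique neighbor
  have huniq : ∀ v : V, IsLeaf G v → ∀ u x : V, G.Adj v u → G.Adj v x → x = u := by
    intro v h u x hu hx
    obtain ⟨a, ha⟩ := Finset.card_eq_one.mp h
    have h1 := (SimpleGraph.mem_neighborFinset G v u).mpr hu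
    have h2 := (SimpleGraph.mem_neighborFinset G v x).mpr hx
    rw [ha] at h1 h2; simp_all
  have huniqL : ∀ v ∈ leafNbrSet G w, ∀ x, G.Adj v x → x = w := by
    intro v hv x hx
    exact huniq v hv.2 w x hv.1.symm hx
  have hwL : w ∉ leafNbrSet G w := fun h => G.irrefl h.1
  -- the finset of leaves
  set LF : Finset V := (leafNbrSet G w).toFinset with hLF
  have hLFmem : ∀ x, x ∈ LF ↔ x ∈ leafNbrSet G w := by
    intro x; simp [hLF]
  have hLFcard : LF.card = t := by
    rw [hLF, ← Set.ncard_eq_toFinset_card']; exact hcard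
  have hwLF : w ∉ LF := by rw [hLFmem]; exact hwL
  obtain ⟨v₁, hv₁⟩ : (leafNbrSet G w).Nonempty := by
    rw [← Set.ncard_pos (Set.toFinite _), hcard]; omega
  -- leaves of support neighbors of w
  have hleafH : ∀ u : V, G.Adj w u → u ∉ leafNbrSet G w →
      ∃ ℓ, ℓ ∈ Kc ∧ G.Adj u ℓ ∧ (∀ x, G.Adj ℓ x → x = u) := by
    intro u hwu huL
    obtain ⟨ℓ, hℓadj, hℓleaf⟩ := hsupp u ⟨hwu, huL⟩
    have huniqℓ : ∀ x, G.Adj ℓ x → x = u := fun x hx => huniq ℓ hℓleaf u x hℓadj.symm hx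
    refine ⟨ℓ, ?_, hℓadj, huniqℓ⟩
    rw [hKcmem]
    constructor
    · intro hℓL
      exact hwu.ne' (huniqℓ w hℓL.1.symm).symm
    · intro hℓw
      subst hℓw
      exact huL (huniqℓ v₁ hv₁.1 ▸ hv₁)
  -- lift and restrict
  set lift : Finset ↥Kc → Finset V :=
    fun S => S.map ⟨Subtype.val, Subtype.val_injective⟩ with hliftdef
  have hmem_lift : ∀ (S : Finset ↥Kc) (x : V),
      x ∈ lift S ↔ ∃ hx : x ∈ Kc, (⟨x, hx⟩ : ↥Kc) ∈ S := by
    intro S x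
    simp only [hliftdef, Finset.mem_map, Function.Embedding.coeFn_mk]
    constructor
    · rintro ⟨⟨a, ha⟩, haS, rfl⟩; exact ⟨ha, haS⟩
    · rintro ⟨hx, hS⟩; exact ⟨⟨x, hx⟩, hS, rfl⟩
  set res : Finset V → Finset ↥Kc := fun S => Finset.subtype (· ∈ Kc) S with hresdef
  have hmem_res : ∀ (S : Finset V) (x : ↥Kc), x ∈ res S ↔ x.1 ∈ S := by
    intro S x; simp [hresdef]
  have hdomG : ∀ S : Finset V, S ∈ domSets G ↔ ∀ v ∉ S, ∃ u ∈ S, G.Adj u v := by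
    intro S; simp [domSets]
  have hHadj : ∀ a b : ↥Kc, H.Adj a b ↔ G.Adj a.1 b.1 := by
    intro a b; simp [hHdef]
  have hdomH : ∀ S : Finset ↥Kc, S ∈ domSets H ↔
      ∀ v ∉ S, ∃ u ∈ S, G.Adj u.1 v.1 := by
    intro S; simp only [domSets, Finset.mem_filter, Finset.mem_univ, true_and, hHadj]
  -- restriction of a dominating set dominates H
  have hres_dom : ∀ S ∈ domSets G, res S ∈ domSets H := by
    intro S hS
    rw [hdomH]
    intro x hx
    rw [hmem_res] at hx
    by_cases hadj : G.Adj w x.1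
    · have hxL : x.1 ∉ leafNbrSet G w := ((hKcmem x.1).mp x.2).1
      obtain ⟨ℓ, hℓKc, hℓadj, hℓuniq⟩ := hleafH x.1 hadj hxL
      have hℓS : ℓ ∈ S := by
        by_contra hℓS
        obtain ⟨u, huS, huadj⟩ := (hdomG S).mp hS ℓ hℓS
        exact hx ((hℓuniq u huadj.symm) ▸ huS)
      exact ⟨⟨ℓ, hℓKc⟩, (hmem_res S ⟨ℓ, hℓKc⟩).mpr hℓS, hℓadj.symm⟩
    · obtain ⟨u, huS, huadj⟩ := (hdomG S).mp hS x.1 hx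
      have huKc : u ∈ Kc := by
        rw [hKcmem]
        constructor
        · intro huL
          exact ((hKcmem x.1).mp x.2).2 (huniqL u huL x.1 huadj)
        · rintro rfl; exact hadj huadj
      exact ⟨⟨u, huKc⟩, (hmem_res S ⟨u, huKc⟩).mpr huS, huadj⟩
  -- lifting with w
  have hlift1 : ∀ S' ∈ domSets H, ∀ A ∈ LF.powerset,
      lift S' ∪ A ∪ {w} ∈ domSets G := by
    intro S' hS' A hA
    rw [hdomG]
    intro v hv
    simp only [Finset.mem_union, Finset.mem_singleton, not_or] at hv
    obtain ⟨⟨hvlift, hvA⟩, hvw⟩ := hv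
    by_cases hvKc : v ∈ Kc
    · have hnot : (⟨v, hvKc⟩ : ↥Kc) ∉ S' := fun h => hvlift ((hmem_lift S' v).mpr ⟨hvKc, h⟩)
      obtain ⟨u, huS', huadj⟩ := (hdomH S').mp hS' ⟨v, hvKc⟩ hnot
      exact ⟨u.1, Finset.mem_union_left _ (Finset.mem_union_left _
        ((hmem_lift S' u.1).mpr ⟨u.2, huS'⟩)), huadj⟩
    · have hvL : v ∈ leafNbrSet G w := by
        by_contra h; exact hvKc ((hKcmem v).mpr ⟨h, hvw⟩)
      exact ⟨w, Finset.mem_union_right _ (Finset.mem_singleton_self w), hvL.1⟩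
  have hlift2 : ∀ S' ∈ domSets H, lift S' ∪ LF ∈ domSets G := by
    intro S' hS'
    rw [hdomG]
    intro v hv
    simp only [Finset.mem_union, not_or] at hv
    obtain ⟨hvlift, hvLF⟩ := hv
    by_cases hvw : v = w
    · subst hvw
      exact ⟨v₁, Finset.mem_union_right _ ((hLFmem v₁).mpr hv₁), hv₁.1.symm⟩
    · have hvKc : v ∈ Kc := (hKcmem v).mpr ⟨fun h => hvLF ((hLFmem v).mpr h), hvw⟩
      have hnot : (⟨v, hvKc⟩ : ↥Kc) ∉ S' := fun h => hvlift ((hmem_lift S' v).mpr ⟨hvKc, h⟩)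
      obtain ⟨u, huS', huadj⟩ := (hdomH S').mp hS' ⟨v, hvKc⟩ hnot
      exact ⟨u.1, Finset.mem_union_left _ ((hmem_lift S' u.1).mpr ⟨u.2, huS'⟩), huadj⟩
  have hforce : ∀ S ∈ domSets G, w ∉ S → LF ⊆ S := by
    intro S hS hwS v hvLF
    by_contra hvS
    obtain ⟨u, huS, huadj⟩ := (hdomG S).mp hS v hvS
    exact hwS ((huniqL v ((hLFmem v).mp hvLF) u huadj.symm) ▸ huS)
  -- reconstruction identities
  have hrecon1 : ∀ S : Finset V, w ∈ S → lift (res S) ∪ (S ∩ LF) ∪ {w} = S := by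
    intro S hwS
    ext x
    simp only [Finset.mem_union, Finset.mem_singleton, Finset.mem_inter, hmem_lift, hmem_res]
    constructor
    · rintro ((⟨hx, hxS⟩ | ⟨hxS, -⟩) | rfl)
      · exact hxS
      · exact hxS
      · exact hwS
    · intro hxS
      by_cases hxKc : x ∈ Kc
      · exact Or.inl (Or.inl ⟨hxKc, hxS⟩)
      · by_cases hxw : x = w
        · exact Or.inr hxw
        · have hxL : x ∈ leafNbrSet G w := by
            by_contra h; exact hxKc ((hKcmem x).mpr ⟨h, hxw⟩)
          exact Or.inl (Or.inr ⟨hxS, (hLFmem x).mpr hxL⟩)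
  have hrecon2 : ∀ S : Finset V, LF ⊆ S → w ∉ S → lift (res S) ∪ LF = S := by
    intro S hLFS hwS
    ext x
    simp only [Finset.mem_union, hmem_lift, hmem_res]
    constructor
    · rintro (⟨hx, hxS⟩ | hxLF)
      · exact hxS
      · exact hLFS hxLF
    · intro hxS
      by_cases hxKc : x ∈ Kc
      · exact Or.inl ⟨hxKc, hxS⟩
      · right
        rw [hLFmem]
        have hxw : x ≠ w := by rintro rfl; exact hwS hxS
        by_contra h; exact hxKc ((hKcmem x).mpr ⟨h, hxw⟩)
  have hres_lift : ∀ (S' : Finset ↥Kc) (B : Finset V), (∀ x ∈ B, x ∉ Kc) →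
      res (lift S' ∪ B) = S' := by
    intro S' B hB
    ext y
    rw [hmem_res]
    simp only [Finset.mem_union, hmem_lift]
    constructor
    · rintro (⟨hy, hyS⟩ | hyB)
      · exact hyS
      · exact absurd y.2 (hB y.1 hyB)
    · intro hyS'
      exact Or.inl ⟨y.2, hyS'⟩
  have hBnotKc1 : ∀ A : Finset V, A ⊆ LF → ∀ x ∈ A ∪ {w}, x ∉ Kc := by
    intro A hA x hx hxKc
    rcases Finset.mem_union.mp hx with h | h
    · exact ((hKcmem x).mp hxKc).1 ((hLFmem x).mp (hA h))
    · exact ((hKcmem x).mp hxKc).2 (Finset.mem_singleton.mp h)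
  have hBnotKc2 : ∀ x ∈ LF, x ∉ Kc := by
    intro x hx hxKc; exact ((hKcmem x).mp hxKc).1 ((hLFmem x).mp hx)
  have hinter : ∀ (S' : Finset ↥Kc) (A : Finset V), A ⊆ LF →
      (lift S' ∪ A ∪ {w}) ∩ LF = A := by
    intro S' A hA
    ext x
    simp only [Finset.mem_inter, Finset.mem_union, Finset.mem_singleton, hmem_lift]
    constructor
    · rintro ⟨(⟨hx, -⟩ | hxA) | rfl, hxLF⟩
      · exact absurd hx (hBnotKc2 x hxLF)
      · exact hxA
      · exact absurd hxLF hwLF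
    · intro hxA
      exact ⟨Or.inl (Or.inr hxA), hA hxA⟩
  -- cardinalities
  have hcard_lift : ∀ S' : Finset ↥Kc, (lift S').card = S'.card := by
    intro S'; rw [hliftdef]; exact Finset.card_map _
  have hcard1 : ∀ (S' : Finset ↥Kc) (A : Finset V), A ⊆ LF →
      ((lift S' ∪ A ∪ {w}).card : ℤ) = S'.card + A.card + 1 := by
    intro S' A hA
    have hd1 : Disjoint (lift S') A := by
      rw [Finset.disjoint_left]
      intro x hx hxA
      exact hBnotKc2 x (hA hxA) ((hmem_lift S' x).mp hx).1
    have hd2 : Disjoint (lift S' ∪ A) {w} := by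
      rw [Finset.disjoint_right]
      intro x hx
      rw [Finset.mem_singleton] at hx
      simp only [Finset.mem_union, not_or]
      constructor
      · intro h
        exact ((hKcmem x).mp ((hmem_lift S' x).mp h).1).2 hx
      · intro h
        rw [hx] at h
        exact hwLF (hA h)
    rw [Finset.card_union_of_disjoint hd2, Finset.card_union_of_disjoint hd1,
      hcard_lift, Finset.card_singleton]
    push_cast; ring
  have hcard2 : ∀ S' : Finset ↥Kc, ((lift S' ∪ LF).card : ℤ) = S'.card + t := by
    intro S'
    have hd : Disjoint (lift S') LF := by
      rw [Finset.disjoint_left]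
      intro x hx hxLF
      exact hBnotKc2 x hxLF ((hmem_lift S' x).mp hx).1
    rw [Finset.card_union_of_disjoint hd, hcard_lift, hLFcard]
    push_cast; ring
  -- the master sum decomposition
  have hsplit : ∀ f : Finset V → ℤ,
      ∑ S ∈ domSets G, f S
        = (∑ p ∈ (domSets H) ×ˢ LF.powerset, f (lift p.1 ∪ p.2 ∪ {w}))
          + ∑ S' ∈ domSets H, f (lift S' ∪ LF) := by
    intro f
    rw [← Finset.sum_filter_add_sum_filter_not (domSets G) (fun S => w ∈ S) f]
    congr 1
    · refine Finset.sum_nbij' (fun S => (res S, S ∩ LF)) (fun p => lift p.1 ∪ p.2 ∪ {w})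
        ?_ ?_ ?_ ?_ ?_
      · intro S hS
        rw [Finset.mem_filter] at hS
        rw [Finset.mem_product]
        exact ⟨hres_dom S hS.1, Finset.mem_powerset.mpr Finset.inter_subset_right⟩
      · intro p hp
        rw [Finset.mem_product, Finset.mem_powerset] at hp
        rw [Finset.mem_filter]
        exact ⟨hlift1 p.1 hp.1 p.2 (Finset.mem_powerset.mpr hp.2),
          Finset.mem_union_right _ (Finset.mem_singleton_self w)⟩
      · intro S hS
        rw [Finset.mem_filter] at hS
        exact hrecon1 S hS.2
      · intro p hp
        rw [Finset.mem_product, Finset.mem_powerset] at hp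
        refine Prod.ext ?_ ?_
        · show res (lift p.1 ∪ p.2 ∪ {w}) = p.1
          rw [Finset.union_assoc]
          exact hres_lift p.1 (p.2 ∪ {w}) (hBnotKc1 p.2 hp.2)
        · exact hinter p.1 p.2 hp.2
      · intro S hS
        rw [Finset.mem_filter] at hS
        rw [hrecon1 S hS.2]
    · refine Finset.sum_nbij' res (fun S' => lift S' ∪ LF) ?_ ?_ ?_ ?_ ?_
      · intro S hS
        rw [Finset.mem_filter] at hS
        exact hres_dom S hS.1
      · intro S' hS'
        rw [Finset.mem_filter]
        refine ⟨hlift2 S' hS', ?_⟩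
        simp only [Finset.mem_union, not_or]
        exact ⟨fun h => ((hKcmem w).mp ((hmem_lift S' w).mp h).1).2 rfl, hwLF⟩
      · intro S hS
        rw [Finset.mem_filter] at hS
        exact hrecon2 S (hforce S hS.1 hS.2) hS.2
      · intro S' hS'
        exact hres_lift S' LF hBnotKc2
      · intro S hS
        rw [Finset.mem_filter] at hS
        rw [hrecon2 S (hforce S hS.1 hS.2) hS.2]
  -- numeric abbreviations
  set SG : ℤ := ∑ S ∈ domSets G, (S.card : ℤ) with hSG
  set AH : ℤ := ∑ S ∈ domSets H, (S.card : ℤ) with hAH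
  set N : ℤ := ((domSets H).card : ℤ) with hN
  set n : ℤ := (Fintype.card V : ℤ) with hn
  set P : ℤ := (2 : ℤ) ^ (t - 1) with hP
  have hP2 : (2 : ℤ) ^ t = 2 * P := by
    rw [hP, ← pow_succ']
    congr 1; omega
  have hP1 : 1 ≤ P := by rw [hP]; exact one_le_pow₀ (by norm_num)
  have hNpos : 1 ≤ N := by
    have huniv : (Finset.univ : Finset ↥Kc) ∈ domSets H := by
      rw [hdomH]
      intro v hv
      exact absurd (Finset.mem_univ v) hv
    rw [hN]
    exact_mod_cast Finset.card_pos.mpr ⟨_, huniv⟩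
  have hCsum : ∑ A ∈ LF.powerset, (A.card : ℤ) = t * P := by
    have hswap : ∑ A ∈ LF.powerset, (A.card : ℤ)
        = ∑ A ∈ LF.powerset, ((LF \ A).card : ℤ) := by
      refine Finset.sum_nbij' (fun A => LF \ A) (fun A => LF \ A) ?_ ?_ ?_ ?_ ?_
      · intro A hA; exact Finset.mem_powerset.mpr (Finset.sdiff_subset)
      · intro A hA; exact Finset.mem_powerset.mpr (Finset.sdiff_subset)
      · intro A hA; exact Finset.sdiff_sdiff_eq_self (Finset.mem_powerset.mp hA)
      · intro A hA; exact Finset.sdiff_sdiff_eq_self (Finset.mem_powerset.mp hA)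
      · intro A hA; rw [Finset.sdiff_sdiff_eq_self (Finset.mem_powerset.mp hA)]
    have hpt : ∀ A ∈ LF.powerset, (A.card : ℤ) + ((LF \ A).card : ℤ) = t := by
      intro A hA
      have h := Finset.card_sdiff_add_card_eq_card (Finset.mem_powerset.mp hA)
      rw [hLFcard] at h
      omega
    have h2 : (2 : ℤ) * ∑ A ∈ LF.powerset, (A.card : ℤ) = t * 2 ^ t := by
      calc (2 : ℤ) * ∑ A ∈ LF.powerset, (A.card : ℤ)
          = ∑ A ∈ LF.powerset, ((A.card : ℤ) + ((LF \ A).card : ℤ)) := by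
            rw [Finset.sum_add_distrib, ← hswap]; ring
        _ = ∑ _A ∈ LF.powerset, (t : ℤ) := Finset.sum_congr rfl hpt
        _ = (LF.powerset.card : ℤ) * t := by rw [Finset.sum_const]; push_cast; ring
        _ = t * 2 ^ t := by rw [Finset.card_powerset, hLFcard]; push_cast; ring
    have h3 : (2 : ℤ) * ∑ A ∈ LF.powerset, (A.card : ℤ) = 2 * ((t : ℤ) * P) := by
      rw [h2, hP2]; ring
    exact mul_left_cancel₀ two_ne_zero h3
  have hcardG : ((domSets G).card : ℤ) = (2 * P + 1) * N := by
    have h := hsplit (fun _ => (1 : ℤ))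
    simp only [Finset.sum_const, nsmul_eq_mul, mul_one] at h
    have hc : ((domSets H) ×ˢ LF.powerset).card = (domSets H).card * 2 ^ t := by
      rw [Finset.card_product, Finset.card_powerset, hLFcard]
    rw [hc] at h
    rw [h, hN]
    push_cast
    rw [hP2]
    ring
  have hSGval : SG = (2 * P + 1) * AH + (2 * P + t * P + t) * N := by
    have h := hsplit (fun S => (S.card : ℤ))
    have hA1 : ∑ p ∈ (domSets H) ×ˢ LF.powerset, ((lift p.1 ∪ p.2 ∪ {w}).card : ℤ)
        = 2 ^ t * AH + ((t : ℤ) * P + 2 ^ t) * N := by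
      rw [Finset.sum_product]
      have hin : ∀ S' ∈ domSets H, (∑ A ∈ LF.powerset, ((lift S' ∪ A ∪ {w}).card : ℤ))
          = 2 ^ t * (S'.card : ℤ) + ((t : ℤ) * P + 2 ^ t) := by
        intro S' _
        rw [Finset.sum_congr rfl (fun A hA => hcard1 S' A (Finset.mem_powerset.mp hA))]
        rw [Finset.sum_add_distrib, Finset.sum_add_distrib, hCsum, Finset.sum_const,
          Finset.sum_const, Finset.card_powerset, hLFcard]
        push_cast
        ring
      rw [Finset.sum_congr rfl hin, Finset.sum_add_distrib, Finset.sum_const,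
        ← Finset.mul_sum, hAH, hN]
      push_cast
      ring
    have hA2 : ∑ S' ∈ domSets H, ((lift S' ∪ LF).card : ℤ) = AH + (t : ℤ) * N := by
      rw [Finset.sum_congr rfl (fun S' _ => hcard2 S'), Finset.sum_add_distrib,
        Finset.sum_const, hAH, hN]
      push_cast
      ring
    rw [hSG, h, hA1, hA2, hP2, hP]
    ring
  -- final arithmetic
  have hkey : 3 * SG - 2 * n * ((domSets G).card : ℤ)
      = (2 * P + 1) * (3 * AH - 2 * (n - t - 1) * N) - ((t : ℤ) - 2) * (P - 1) * N := by
    rw [hSGval, hcardG]; ring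
  have hX : 3 * AH - 2 * (n - t - 1) * N ≤ 0 := by linarith [hH]
  have hY : 0 ≤ ((t : ℤ) - 2) * (P - 1) := by
    rcases Nat.lt_or_ge t 2 with h | h
    · interval_cases t
      · simp [hP]
    · have h1 : (2 : ℤ) ≤ (t : ℤ) := by exact_mod_cast h
      exact mul_nonneg (by linarith) (by linarith)
  constructor
  · intro heq
    have h0 : (2 * P + 1) * (3 * AH - 2 * (n - t - 1) * N)
        - ((t : ℤ) - 2) * (P - 1) * N = 0 := by
      rw [← hkey]; linarith
    have hle : (2 * P + 1) * (3 * AH - 2 * (n - t - 1) * N) ≤ 0 :=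
      mul_nonpos_of_nonneg_of_nonpos (by linarith) hX
    have hge : 0 ≤ ((t : ℤ) - 2) * (P - 1) * N := mul_nonneg hY (by linarith)
    have h1 : (2 * P + 1) * (3 * AH - 2 * (n - t - 1) * N) = 0 := by linarith
    have h2 : ((t : ℤ) - 2) * (P - 1) * N = 0 := by linarith
    have hAH0 : 3 * AH - 2 * (n - t - 1) * N = 0 := by
      rcases mul_eq_zero.mp h1 with h | h
      · exfalso; linarith
      · exact h
    refine ⟨?_, by linarith⟩
    rcases mul_eq_zero.mp h2 with h | h
    · rcases mul_eq_zero.mp h with h | h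
      · right; have : (t : ℤ) = 2 := by linarith
        exact_mod_cast this
      · left
        have hPeq : P = 1 := by linarith
        by_contra hne
        have ht2 : 2 ≤ t := by omega
        have : (2:ℤ) ≤ P := by
          rw [hP]
          calc (2:ℤ) = 2 ^ 1 := by norm_num
          _ ≤ 2 ^ (t-1) := by
            apply pow_le_pow_right₀ (by norm_num); omega
        linarith
    · linarith
  · rintro ⟨htv, hAHeq⟩
    have hY0 : ((t : ℤ) - 2) * (P - 1) = 0 := by
      have : P = 1 ∨ (t : ℤ) = 2 := by
        rcases htv with h | h
        · left; rw [hP, h]; norm_num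
        · right; rw [h]; norm_num
      rcases this with h | h <;> rw [h] <;> ring
    have : 3 * SG - 2 * n * ((domSets G).card : ℤ) = 0 := by
      rw [hkey, hY0]; rw [hAHeq]; ring
    linarith
end

section
/- Let G be a graph, u ∈ V(G), and for an integer k ≥ 1 let G_{(u,k)} denote the graph obtained from G by adding k new vertices which are pairwise adjacent and each adjacent to u (so that u together with the new vertices induces a complete graph K_{k+1}). Then the domination polynomials satisfy D_{G_{(u,k)}}(x) = (x+1)^{k−1}·[D_{G_{(u,1)}}(x) + D_{G∖u}(x)] − D_{G∖u}(x), where G∖u is the induced subgraph on V(G) ∖ {u}. -/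
open scoped Classical

/-- The domination polynomial of `G`, evaluated at `x`. -/
noncomputable def domPoly {V : Type*} [Fintype V] (G : SimpleGraph V) (x : ℚ) : ℚ :=
  ∑ S ∈ domSets G, x ^ S.card


/-- `glueClique G u k` is the graph obtained from `G` by adding `k` new vertices which are
pairwise adjacent and each adjacent to `u` (so `u` together with the new vertices induces
a complete graph `K_{k+1}`). -/
def glueClique {V : Type*} (G : SimpleGraph V) (u : V) (k : ℕ) :
    SimpleGraph (V ⊕ Fin k) :=
  SimpleGraph.fromRel fun a b =>
    match a, b with
    | Sum.inl x, Sum.inl y => G.Adj x y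
    | Sum.inl x, Sum.inr _ => x = u
    | Sum.inr _, Sum.inl y => y = u
    | Sum.inr _, Sum.inr _ => True


section Aux

open Finset

variable {V : Type*} [Fintype V]

/-- Sets dominating everything except possibly `u`. -/
private def PDomE (G : SimpleGraph V) (u : V) (A : Finset V) : Prop :=
  ∀ v ∉ A, v ≠ u → ∃ a ∈ A, G.Adj a v

private lemma sum_pow_card_finset (k : ℕ) (x : ℚ) :
    ∑ B : Finset (Fin k), x ^ B.card = (x + 1) ^ k := by
  have h := Finset.prod_add (fun _ : Fin k => x) (fun _ => (1 : ℚ)) Finset.univ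
  simpa [Finset.powerset_univ] using h.symm

private lemma glue_adj_inl_inl (G : SimpleGraph V) (u : V) (k : ℕ) (a b : V) :
    (glueClique G u k).Adj (Sum.inl a) (Sum.inl b) ↔ G.Adj a b := by
  constructor
  · rintro ⟨-, h | h⟩
    · exact h
    · exact h.symm
  · intro h
    exact ⟨by simpa using h.ne, Or.inl h⟩

private lemma glue_adj_inl_inr (G : SimpleGraph V) (u : V) (k : ℕ) (a : V) (i : Fin k) :
    (glueClique G u k).Adj (Sum.inl a) (Sum.inr i) ↔ a = u := by
  constructor
  · rintro ⟨-, h | h⟩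
    · exact h
    · exact h
  · intro h
    exact ⟨by simp, Or.inl h⟩

private lemma glue_adj_inr_inl (G : SimpleGraph V) (u : V) (k : ℕ) (i : Fin k) (a : V) :
    (glueClique G u k).Adj (Sum.inr i) (Sum.inl a) ↔ a = u := by
  rw [(glueClique G u k).adj_comm, glue_adj_inl_inr]

private lemma glue_adj_inr_inr (G : SimpleGraph V) (u : V) (k : ℕ) (i j : Fin k) :
    (glueClique G u k).Adj (Sum.inr i) (Sum.inr j) ↔ i ≠ j := by
  constructor
  · rintro ⟨h, -⟩
    simpa using h
  · intro h
    exact ⟨by simpa using h, Or.inl trivial⟩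

private lemma disjSum_mem_domSets (G : SimpleGraph V) (u : V) (k : ℕ) (hk : 1 ≤ k)
    (A : Finset V) (B : Finset (Fin k)) :
    A.disjSum B ∈ domSets (glueClique G u k) ↔
      (B.Nonempty ∧ PDomE G u A) ∨ (B = ∅ ∧ u ∈ A ∧ A ∈ domSets G) := by
  simp only [domSets, Finset.mem_filter, Finset.mem_univ, true_and]
  constructor
  · intro hdom
    rcases B.eq_empty_or_nonempty with hB | hB
    · right
      refine ⟨hB, ?_, ?_⟩
      · have h0 : (Sum.inr ⟨0, hk⟩ : V ⊕ Fin k) ∉ A.disjSum B := by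
          simp [Finset.inr_mem_disjSum, hB]
        obtain ⟨w, hw, hadj⟩ := hdom _ h0
        rcases w with a | i
        · rw [Finset.inl_mem_disjSum] at hw
          rw [glue_adj_inl_inr] at hadj
          exact hadj ▸ hw
        · rw [Finset.inr_mem_disjSum, hB] at hw
          simp at hw
      · intro v hv
        obtain ⟨w, hw, hadj⟩ := hdom (Sum.inl v)
          (by simp [Finset.inl_mem_disjSum, hv])
        rcases w with a | i
        · rw [Finset.inl_mem_disjSum] at hw
          rw [glue_adj_inl_inl] at hadj
          exact ⟨a, hw, hadj⟩
        · rw [Finset.inr_mem_disjSum, hB] at hw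
          simp at hw
    · left
      refine ⟨hB, fun v hv hvu => ?_⟩
      obtain ⟨w, hw, hadj⟩ := hdom (Sum.inl v)
        (by simp [Finset.inl_mem_disjSum, hv])
      rcases w with a | i
      · rw [Finset.inl_mem_disjSum] at hw
        rw [glue_adj_inl_inl] at hadj
        exact ⟨a, hw, hadj⟩
      · rw [glue_adj_inr_inl] at hadj
        exact absurd hadj hvu
  · rintro (⟨hB, hP⟩ | ⟨hB, huA, hdomA⟩) <;> rintro (v | i) hw
    · rw [Finset.inl_mem_disjSum] at hw
      by_cases hvu : v = u
      · obtain ⟨j, hj⟩ := hB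
        exact ⟨Sum.inr j, by simp [Finset.inr_mem_disjSum, hj],
          (glue_adj_inr_inl G u k j v).2 hvu⟩
      · obtain ⟨a, ha, hadj⟩ := hP v hw hvu
        exact ⟨Sum.inl a, by simp [Finset.inl_mem_disjSum, ha],
          (glue_adj_inl_inl G u k a v).2 hadj⟩
    · rw [Finset.inr_mem_disjSum] at hw
      obtain ⟨j, hj⟩ := hB
      have hji : j ≠ i := fun h => hw (h ▸ hj)
      exact ⟨Sum.inr j, by simp [Finset.inr_mem_disjSum, hj],
        (glue_adj_inr_inr G u k j i).2 hji⟩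
    · rw [Finset.inl_mem_disjSum] at hw
      obtain ⟨a, ha, hadj⟩ := hdomA v hw
      exact ⟨Sum.inl a, by simp [Finset.inl_mem_disjSum, ha],
        (glue_adj_inl_inl G u k a v).2 hadj⟩
    · exact ⟨Sum.inl u, by simp [Finset.inl_mem_disjSum, huA],
        (glue_adj_inl_inr G u k u i).2 rfl⟩

/-- The key decomposition of the domination polynomial of the glued graph. -/
private lemma domPoly_glue (G : SimpleGraph V) (u : V) (k : ℕ) (hk : 1 ≤ k) (x : ℚ) :
    domPoly (glueClique G u k) x =
      ((x + 1) ^ k - 1) *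
        (∑ A ∈ Finset.univ.filter (fun A : Finset V => PDomE G u A), x ^ A.card)
      + ∑ A ∈ Finset.univ.filter (fun A : Finset V => u ∈ A ∧ A ∈ domSets G), x ^ A.card := by
  classical
  have key : domPoly (glueClique G u k) x
      = ∑ p ∈ (Finset.univ ×ˢ Finset.univ : Finset (Finset V × Finset (Fin k))).filter
          (fun p => p.1.disjSum p.2 ∈ domSets (glueClique G u k)),
          x ^ (p.1.card + p.2.card) := by
    rw [domPoly]
    refine Finset.sum_nbij' (fun S => (S.toLeft, S.toRight))
      (fun p => p.1.disjSum p.2) ?_ ?_ ?_ ?_ ?_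
    · intro S hS
      simp only [Finset.mem_filter, Finset.mem_product, Finset.mem_univ, true_and,
        and_true]
      rwa [Finset.toLeft_disjSum_toRight]
    · intro p hp
      simp only [Finset.mem_filter] at hp
      exact hp.2
    · intro S _
      exact Finset.toLeft_disjSum_toRight
    · intro p _
      simp [Prod.ext_iff]
    · intro S _
      rw [Finset.card_toLeft_add_card_toRight]
  rw [key]
  have hcong : (Finset.univ ×ˢ Finset.univ : Finset (Finset V × Finset (Fin k))).filter
      (fun p => p.1.disjSum p.2 ∈ domSets (glueClique G u k))
      = (Finset.univ ×ˢ Finset.univ).filter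
        (fun p => (PDomE G u p.1 ∧ p.2.Nonempty) ∨ ((u ∈ p.1 ∧ p.1 ∈ domSets G) ∧ p.2 = ∅)) := by
    apply Finset.filter_congr
    intro p _
    rw [disjSum_mem_domSets G u k hk p.1 p.2]
    tauto
  rw [hcong, Finset.filter_or, Finset.sum_union]
  · congr 1
    · rw [Finset.filter_product (fun A : Finset V => PDomE G u A)
        (fun B : Finset (Fin k) => B.Nonempty), Finset.sum_product]
      simp_rw [pow_add]
      rw [← Finset.sum_mul_sum]
      have hBsum : ∑ B ∈ (Finset.univ : Finset (Finset (Fin k))).filter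
          (fun B => B.Nonempty), x ^ B.card = (x + 1) ^ k - 1 := by
        have hfe : (Finset.univ : Finset (Finset (Fin k))).filter (fun B => B.Nonempty)
            = Finset.univ.erase ∅ := by
          rw [← Finset.filter_ne']
          apply Finset.filter_congr
          intro B _
          exact Finset.nonempty_iff_ne_empty
        rw [hfe]
        have h2 := Finset.sum_erase_add Finset.univ
          (fun B : Finset (Fin k) => x ^ B.card) (Finset.mem_univ ∅)
        rw [sum_pow_card_finset] at h2
        simp only [Finset.card_empty, pow_zero] at h2
        linarith
      rw [hBsum, mul_comm]
    · rw [Finset.filter_product (fun A : Finset V => u ∈ A ∧ A ∈ domSets G)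
        (fun B : Finset (Fin k) => B = ∅), Finset.sum_product]
      have : (Finset.univ : Finset (Finset (Fin k))).filter (fun B => B = ∅) = {∅} := by
        ext B
        simp
      rw [this]
      simp
  · rw [Finset.disjoint_left]
    rintro p hp1 hp2
    simp only [Finset.mem_filter] at hp1 hp2
    rcases hp1.2.2 with ⟨j, hj⟩
    rw [hp2.2.2] at hj
    simp at hj

/-- The number `d`: the domination polynomial of `G - u`. -/
private lemma domPoly_induce_compl (G : SimpleGraph V) (u : V) (x : ℚ) :
    domPoly (G.induce {u}ᶜ) x
      = ∑ A ∈ Finset.univ.filter (fun A : Finset V => PDomE G u A ∧ u ∉ A), x ^ A.card := by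
  classical
  rw [domPoly]
  refine Finset.sum_nbij' (fun S => S.map (Function.Embedding.subtype _))
    (fun A => A.subtype (· ∈ ({u}ᶜ : Set V))) ?_ ?_ ?_ ?_ ?_
  · intro S hS
    simp only [domSets, Finset.mem_filter, Finset.mem_univ, true_and] at hS ⊢
    constructor
    · intro v hv hvu
      have hvmem : v ∈ ({u}ᶜ : Set V) := by simpa using hvu
      have hvS : (⟨v, hvmem⟩ : ({u}ᶜ : Set V)) ∉ S := by
        intro hmem
        exact hv (Finset.mem_map.2 ⟨⟨v, hvmem⟩, hmem, rfl⟩)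
      obtain ⟨w, hw, hadj⟩ := hS _ hvS
      exact ⟨(w : V), Finset.mem_map.2 ⟨w, hw, rfl⟩, hadj⟩
    · intro hu
      obtain ⟨w, -, hw⟩ := Finset.mem_map.1 hu
      have hne : (w : V) ≠ u := by
        have h2 := w.2
        simp only [Set.mem_compl_iff, Set.mem_singleton_iff] at h2
        exact h2
      exact hne hw
  · intro A hA
    simp only [Finset.mem_filter, Finset.mem_univ, true_and] at hA
    simp only [domSets, Finset.mem_filter, Finset.mem_univ, true_and]
    rintro ⟨v, hv⟩ hvS
    have hvA : v ∉ A := fun h => hvS (Finset.mem_subtype.2 h)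
    have hvu : v ≠ u := by simpa using hv
    obtain ⟨a, ha, hadj⟩ := hA.1 v hvA hvu
    have hau : a ∈ ({u}ᶜ : Set V) := by
      simp only [Set.mem_compl_iff, Set.mem_singleton_iff]
      rintro rfl
      exact hA.2 ha
    exact ⟨⟨a, hau⟩, Finset.mem_subtype.2 ha, hadj⟩
  · intro S _
    ext ⟨a, ha⟩
    simp only [Finset.mem_subtype, Finset.mem_map, Function.Embedding.coe_subtype,
      Subtype.exists, exists_and_right, exists_eq_right]
    exact ⟨fun ⟨_, h⟩ => h, fun h => ⟨ha, h⟩⟩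
  · intro A hA
    simp only [Finset.mem_filter, Finset.mem_univ, true_and] at hA
    rw [Finset.subtype_map]
    apply Finset.filter_true_of_mem
    intro a haA
    simp only [Set.mem_compl_iff, Set.mem_singleton_iff]
    rintro rfl
    exact hA.2 haA
  · intro S _
    rw [Finset.card_map]

private lemma f_split (G : SimpleGraph V) (u : V) (x : ℚ) :
    (∑ A ∈ Finset.univ.filter (fun A : Finset V => PDomE G u A), x ^ A.card)
      = (∑ A ∈ Finset.univ.filter (fun A : Finset V => u ∈ A ∧ A ∈ domSets G), x ^ A.card)
      + ∑ A ∈ Finset.univ.filter (fun A : Finset V => PDomE G u A ∧ u ∉ A), x ^ A.card := by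
  classical
  rw [← Finset.sum_filter_add_sum_filter_not (Finset.univ.filter
    (fun A : Finset V => PDomE G u A)) (fun A => u ∈ A) (fun A => x ^ A.card)]
  congr 1
  · apply Finset.sum_congr _ (fun _ _ => rfl)
    rw [Finset.filter_filter]
    apply Finset.filter_congr
    intro A _
    simp only [domSets, Finset.mem_filter, Finset.mem_univ, true_and]
    constructor
    · rintro ⟨hP, hu⟩
      refine ⟨hu, fun v hv => ?_⟩
      have hvu : v ≠ u := fun h => hv (h ▸ hu)
      exact hP v hv hvu
    · rintro ⟨hu, hdom⟩
      exact ⟨fun v hv _ => hdom v hv, hu⟩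
  · apply Finset.sum_congr _ (fun _ _ => rfl)
    rw [Finset.filter_filter]

end Aux

/-- For every `k ≥ 1`,
`D_{G_{(u,k)}}(x) = (x+1)^{k−1}·[D_{G_{(u,1)}}(x) + D_{G∖u}(x)] − D_{G∖u}(x)`. -/
theorem domPoly_glueClique {V : Type*} [Fintype V] (G : SimpleGraph V) (u : V)
    (k : ℕ) (hk : 1 ≤ k) (x : ℚ) :
    domPoly (glueClique G u k) x =
      (x + 1) ^ (k - 1) * (domPoly (glueClique G u 1) x + domPoly (G.induce {u}ᶜ) x)
        - domPoly (G.induce {u}ᶜ) x := by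
  obtain ⟨m, rfl⟩ : ∃ m, k = m + 1 := ⟨k - 1, by omega⟩
  rw [domPoly_glue G u (m + 1) (by omega) x, domPoly_glue G u 1 le_rfl x,
    domPoly_induce_compl G u x, Nat.add_sub_cancel]
  rw [f_split G u x]
  ring
end

section
/- Let T be a tree with |V(T)| ≥ 3 and let u be a vertex of T that is not a support vertex of T and has at most one neighbor in T that is not a support vertex of T. Let G_1 be the graph obtained from T by attaching a new leaf vertex v adjacent to u. Then |𝒟(G_1)| ≤ |𝒟(T)| + 3·|𝒟(T∖u)|, where T∖u is the induced subgraph on V(T) ∖ {u}. -/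
open scoped Classical

/-- `addLeaf G u` is the graph obtained from `G` by attaching one new leaf vertex
(the vertex `none`) adjacent to `u`. -/
def addLeaf {V : Type*} (G : SimpleGraph V) (u : V) : SimpleGraph (Option V) :=
  SimpleGraph.fromRel fun a b =>
    match a, b with
    | some x, some y => G.Adj x y
    | some x, none => x = u
    | none, some y => y = u
    | none, none => False

section Aux

variable {V : Type*} [Fintype V]

lemma mem_domSets {G : SimpleGraph V} {S : Finset V} :
    S ∈ domSets G ↔ ∀ v ∉ S, ∃ u ∈ S, G.Adj u v := by
  simp [domSets]

lemma addLeaf_adj_some_some (G : SimpleGraph V) (u x y : V) :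
    (addLeaf G u).Adj (some x) (some y) ↔ G.Adj x y := by
  simp only [addLeaf, SimpleGraph.fromRel_adj]
  constructor
  · rintro ⟨-, h | h⟩
    · exact h
    · exact h.symm
  · intro h
    exact ⟨by simpa using h.ne, Or.inl h⟩

lemma addLeaf_adj_some_none (G : SimpleGraph V) (u x : V) :
    (addLeaf G u).Adj (some x) none ↔ x = u := by
  simp only [addLeaf, SimpleGraph.fromRel_adj]
  constructor
  · rintro ⟨-, h | h⟩ <;> exact h
  · intro h; exact ⟨by simp, Or.inl h⟩

lemma addLeaf_adj_none_some (G : SimpleGraph V) (u y : V) :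
    (addLeaf G u).Adj none (some y) ↔ y = u :=
  ⟨fun h => (addLeaf_adj_some_none G u y).mp h.symm,
   fun h => ((addLeaf_adj_some_none G u y).mpr h).symm⟩

lemma leaf_unique_nbr {G : SimpleGraph V} {ℓ a b : V} (h : IsLeaf G ℓ)
    (ha : G.Adj ℓ a) (hb : G.Adj ℓ b) : a = b := by
  have h1 : (G.neighborFinset ℓ).card ≤ 1 := le_of_eq h
  exact Finset.card_le_one.mp h1 a (by simpa [SimpleGraph.mem_neighborFinset] using ha)
    b (by simpa [SimpleGraph.mem_neighborFinset] using hb)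

end Aux

/-- If `T` is a tree on at least three vertices, `u` is not a support vertex of `T` and
has at most one non-support neighbor, and `G₁` is obtained from `T` by attaching a new
leaf at `u`, then `|𝒟(G₁)| ≤ |𝒟(T)| + 3·|𝒟(T∖u)|`. -/
theorem domSets_addLeaf_le {V : Type*} [Fintype V] (T : SimpleGraph V)
    (htree : T.IsTree) (hn : 3 ≤ Fintype.card V) (u : V)
    (hu : ¬ IsSupport T u)
    (hone : {x | T.Adj u x ∧ ¬ IsSupport T x}.ncard ≤ 1) :
    (domSets (addLeaf T u)).card
      ≤ (domSets T).card + 3 * (domSets (T.induce ({u}ᶜ))).card := by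
  classical
  set Gu := T.induce ({u}ᶜ : Set V) with hGu
  set Du : Finset (Finset V) := (domSets T).filter (fun S => u ∈ S) with hDuDef
  set Dnu : Finset (Finset V) := (domSets T).filter (fun S => u ∉ S) with hDnuDef
  set DTu : Finset (Finset ({u}ᶜ : Set V)) := domSets Gu with hDTuDef
  -- `bad S x` : `x` is outside `S` and its only possible dominator in `S` is `u`.
  set bad : Finset V → V → Prop := fun S x => x ∉ S ∧ ∀ y ∈ S, T.Adj y x → y = u with hbad
  have badAdj : ∀ S ∈ Du, ∀ x, bad S x → T.Adj u x := by
    intro S hS x hx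
    obtain ⟨hSdom, -⟩ := Finset.mem_filter.mp hS
    obtain ⟨y, hyS, hy⟩ := (mem_domSets.mp hSdom) x hx.1
    have := hx.2 y hyS hy
    rwa [this] at hy
  -- If `x` is bad for some `S ∈ Du` and `x` is a support vertex, then `u` is a leaf
  -- adjacent to `x`.
  have badSupp : ∀ S ∈ Du, ∀ x, bad S x → IsSupport T x → IsLeaf T u ∧ T.Adj u x := by
    intro S hS x hx hsupp
    obtain ⟨hSdom, huS⟩ := Finset.mem_filter.mp hS
    obtain ⟨ℓ, hxℓ, hℓ⟩ := hsupp
    by_cases hℓS : ℓ ∈ S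
    · have : ℓ = u := hx.2 ℓ hℓS hxℓ.symm
      subst this
      exact ⟨hℓ, hxℓ.symm⟩
    · obtain ⟨y, hyS, hy⟩ := (mem_domSets.mp hSdom) ℓ hℓS
      have : y = x := leaf_unique_nbr hℓ hy.symm hxℓ.symm
      subst this
      exact absurd hyS hx.1
  -- Any two bad vertices (for any sets in `Du`) are equal.
  have badSub : ∀ S₁ ∈ Du, ∀ S₂ ∈ Du, ∀ x₁ x₂, bad S₁ x₁ → bad S₂ x₂ → x₁ = x₂ := by
    intro S₁ hS₁ S₂ hS₂ x₁ x₂ h₁ h₂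
    have ha₁ := badAdj S₁ hS₁ x₁ h₁
    have ha₂ := badAdj S₂ hS₂ x₂ h₂
    by_cases hs₁ : IsSupport T x₁
    · obtain ⟨hleaf, -⟩ := badSupp S₁ hS₁ x₁ h₁ hs₁
      exact leaf_unique_nbr hleaf ha₁ ha₂
    · by_cases hs₂ : IsSupport T x₂
      · obtain ⟨hleaf, -⟩ := badSupp S₂ hS₂ x₂ h₂ hs₂
        exact leaf_unique_nbr hleaf ha₁ ha₂
      · exact (Set.ncard_le_one_iff (Set.toFinite _)).mp hone ⟨ha₁, hs₁⟩ ⟨ha₂, hs₂⟩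
  -- `noBad S` : every vertex outside `S` has a dominator other than `u`.
  set noBad : Finset V → Prop :=
    fun S => ∀ x ∉ S, ∃ y ∈ S, T.Adj y x ∧ y ≠ u with hnoBad
  have not_noBad : ∀ S, ¬ noBad S → ∃ x, bad S x := by
    intro S h
    simp only [hnoBad, not_forall] at h
    obtain ⟨x, hx, hx2⟩ := h
    refine ⟨x, hx, fun y hyS hadj => ?_⟩
    by_contra hyu
    exact hx2 ⟨y, hyS, hadj, hyu⟩
  -- The "pull back along `some`" map.
  set pull : Finset (Option V) → Finset V :=
    fun S => Finset.univ.filter (fun x => some x ∈ S) with hpull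
  have mem_pull : ∀ S x, x ∈ pull S ↔ some x ∈ S := by
    intro S x; simp [hpull]
  -- restriction to the subtype {u}ᶜ
  set toSub : Finset V → Finset ({u}ᶜ : Set V) :=
    fun W => Finset.univ.filter (fun x => (x : V) ∈ W) with htoSub
  have mem_toSub : ∀ W (x : ({u}ᶜ : Set V)), x ∈ toSub W ↔ (x : V) ∈ W := by
    intro W x; simp [htoSub]
  have gu_adj : ∀ (a b : ({u}ᶜ : Set V)), Gu.Adj a b ↔ T.Adj a b := by
    intro a b; simp [hGu]
  ------------------------------------------------------------------
  -- Step 1 : |D(G₁)| ≤ |Du| + |Du| + |DTu|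
  ------------------------------------------------------------------
  set D1 := domSets (addLeaf T u) with hD1
  set A := D1.filter (fun S => none ∉ S) with hA
  set B := D1.filter (fun S => none ∈ S ∧ some u ∈ S) with hB
  set C := D1.filter (fun S => none ∈ S ∧ some u ∉ S) with hC
  have hcover1 : D1 ⊆ A ∪ B ∪ C := by
    intro S hS
    simp only [hA, hB, hC, Finset.mem_union, Finset.mem_filter]
    tauto
  -- a common fact : if S ∈ D1 and (none ∉ S → some u ∈ S picks up), pull S dominates T
  have hAcard : A.card ≤ Du.card := by
    apply Finset.card_le_card_of_injOn pull
    · intro S hS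
      obtain ⟨hSD, hnone⟩ := Finset.mem_filter.mp hS
      have hSdom := mem_domSets.mp hSD
      have husome : some u ∈ S := by
        obtain ⟨y, hyS, hy⟩ := hSdom none hnone
        match y with
        | none => exact absurd rfl hy.ne
        | some z =>
          have : z = u := (addLeaf_adj_some_none T u z).mp hy
          rwa [this] at hyS
      refine Finset.mem_filter.mpr ⟨mem_domSets.mpr ?_, (mem_pull S u).mpr husome⟩
      intro x hx
      have : some x ∉ S := fun h => hx ((mem_pull S x).mpr h)
      obtain ⟨y, hyS, hy⟩ := hSdom (some x) this
      match y with
      | none => exact absurd hyS hnone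
      | some z =>
        exact ⟨z, (mem_pull S z).mpr hyS, (addLeaf_adj_some_some T u z x).mp hy⟩
    · intro S₁ h₁ S₂ h₂ heq
      obtain ⟨-, hn₁⟩ := Finset.mem_filter.mp h₁
      obtain ⟨-, hn₂⟩ := Finset.mem_filter.mp h₂
      ext a
      match a with
      | none => simp [hn₁, hn₂]
      | some x =>
        rw [← mem_pull S₁ x, ← mem_pull S₂ x, heq]
  have hBcard : B.card ≤ Du.card := by
    apply Finset.card_le_card_of_injOn pull
    · intro S hS
      obtain ⟨hSD, hnone, husome⟩ := Finset.mem_filter.mp hS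
      have hSdom := mem_domSets.mp hSD
      refine Finset.mem_filter.mpr ⟨mem_domSets.mpr ?_, (mem_pull S u).mpr husome⟩
      intro x hx
      have hxS : some x ∉ S := fun h => hx ((mem_pull S x).mpr h)
      obtain ⟨y, hyS, hy⟩ := hSdom (some x) hxS
      match y with
      | none =>
        have : x = u := (addLeaf_adj_none_some T u x).mp hy
        exact absurd ((mem_pull S u).mpr husome) (this ▸ hx)
      | some z =>
        exact ⟨z, (mem_pull S z).mpr hyS, (addLeaf_adj_some_some T u z x).mp hy⟩
    · intro S₁ h₁ S₂ h₂ heq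
      obtain ⟨-, hn₁, -⟩ := Finset.mem_filter.mp h₁
      obtain ⟨-, hn₂, -⟩ := Finset.mem_filter.mp h₂
      ext a
      match a with
      | none => simp [hn₁, hn₂]
      | some x =>
        rw [← mem_pull S₁ x, ← mem_pull S₂ x, heq]
  have hCcard : C.card ≤ DTu.card := by
    apply Finset.card_le_card_of_injOn (fun S => toSub (pull S))
    · intro S hS
      obtain ⟨hSD, hnone, husome⟩ := Finset.mem_filter.mp hS
      have hSdom := mem_domSets.mp hSD
      refine mem_domSets.mpr ?_
      intro x hx
      have hxS : some (x : V) ∉ S := by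
        intro h
        exact hx ((mem_toSub _ x).mpr ((mem_pull S _).mpr h))
      obtain ⟨y, hyS, hy⟩ := hSdom (some (x : V)) hxS
      match y with
      | none =>
        have : (x : V) = u := (addLeaf_adj_none_some T u _).mp hy
        exact absurd this x.2
      | some z =>
        have hz : T.Adj z (x : V) := (addLeaf_adj_some_some T u z _).mp hy
        have hzu : z ≠ u := by
          rintro rfl; exact husome hyS
        refine ⟨⟨z, hzu⟩, (mem_toSub _ _).mpr ((mem_pull S z).mpr hyS), ?_⟩
        exact (gu_adj _ _).mpr hz
    · intro S₁ h₁ S₂ h₂ heq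
      obtain ⟨-, hn₁, hu₁⟩ := Finset.mem_filter.mp h₁
      obtain ⟨-, hn₂, hu₂⟩ := Finset.mem_filter.mp h₂
      ext a
      match a with
      | none => simp [hn₁, hn₂]
      | some x =>
        by_cases hxu : x = u
        · subst hxu; simp [hu₁, hu₂]
        · have : (⟨x, hxu⟩ : ({u}ᶜ : Set V)) ∈ toSub (pull S₁) ↔
              (⟨x, hxu⟩ : ({u}ᶜ : Set V)) ∈ toSub (pull S₂) := by
            have heq' : toSub (pull S₁) = toSub (pull S₂) := heq
            rw [heq']
          simpa [mem_toSub, mem_pull] using this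
  ------------------------------------------------------------------
  -- Step 2 : |Du| ≤ |Dnu| + |DTu| + |DTu|
  ------------------------------------------------------------------
  set selfdom : Finset V → Prop := fun S => ∃ y ∈ S, T.Adj y u with hselfdom
  set P1 := Du.filter (fun S => noBad S ∧ selfdom S) with hP1
  set P2 := Du.filter (fun S => noBad S ∧ ¬ selfdom S) with hP2
  set P3 := Du.filter (fun S => ¬ noBad S) with hP3
  have hcover2 : Du ⊆ P1 ∪ P2 ∪ P3 := by
    intro S hS
    simp only [hP1, hP2, hP3, Finset.mem_union, Finset.mem_filter]
    tauto
  have hP1card : P1.card ≤ Dnu.card := by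
    apply Finset.card_le_card_of_injOn (fun S => S.erase u)
    · intro S hS
      obtain ⟨hSDu, hnb, hsd⟩ := Finset.mem_filter.mp hS
      obtain ⟨hSdom, huS⟩ := Finset.mem_filter.mp hSDu
      refine Finset.mem_filter.mpr ⟨mem_domSets.mpr ?_, Finset.notMem_erase u S⟩
      intro x hx
      by_cases hxu : x = u
      · subst hxu
        obtain ⟨y, hyS, hy⟩ := hsd
        exact ⟨y, Finset.mem_erase.mpr ⟨hy.ne, hyS⟩, hy⟩
      · have hxS : x ∉ S := fun h => hx (Finset.mem_erase.mpr ⟨hxu, h⟩)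
        obtain ⟨y, hyS, hy, hyu⟩ := hnb x hxS
        exact ⟨y, Finset.mem_erase.mpr ⟨hyu, hyS⟩, hy⟩
    · intro S₁ h₁ S₂ h₂ heq
      obtain ⟨hSDu₁, -⟩ := Finset.mem_filter.mp h₁
      obtain ⟨hSDu₂, -⟩ := Finset.mem_filter.mp h₂
      obtain ⟨-, hu₁⟩ := Finset.mem_filter.mp hSDu₁
      obtain ⟨-, hu₂⟩ := Finset.mem_filter.mp hSDu₂
      have heq' : S₁.erase u = S₂.erase u := heq
      have : insert u (S₁.erase u) = insert u (S₂.erase u) := by rw [heq']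
      rwa [Finset.insert_erase hu₁, Finset.insert_erase hu₂] at this
  have hP2card : P2.card ≤ DTu.card := by
    apply Finset.card_le_card_of_injOn toSub
    · intro S hS
      obtain ⟨hSDu, hnb, -⟩ := Finset.mem_filter.mp hS
      obtain ⟨hSdom, -⟩ := Finset.mem_filter.mp hSDu
      refine mem_domSets.mpr ?_
      intro x hx
      have hxS : (x : V) ∉ S := fun h => hx ((mem_toSub S x).mpr h)
      obtain ⟨y, hyS, hy, hyu⟩ := hnb (x : V) hxS
      exact ⟨⟨y, hyu⟩, (mem_toSub S _).mpr hyS, (gu_adj _ _).mpr hy⟩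
    · intro S₁ h₁ S₂ h₂ heq
      obtain ⟨hSDu₁, -⟩ := Finset.mem_filter.mp h₁
      obtain ⟨hSDu₂, -⟩ := Finset.mem_filter.mp h₂
      obtain ⟨-, hu₁⟩ := Finset.mem_filter.mp hSDu₁
      obtain ⟨-, hu₂⟩ := Finset.mem_filter.mp hSDu₂
      ext x
      by_cases hxu : x = u
      · subst hxu; simp [hu₁, hu₂]
      · have : (⟨x, hxu⟩ : ({u}ᶜ : Set V)) ∈ toSub S₁ ↔
            (⟨x, hxu⟩ : ({u}ᶜ : Set V)) ∈ toSub S₂ := by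
          have heq' : toSub S₁ = toSub S₂ := heq
          rw [heq']
        simpa [mem_toSub] using this
  -- the bad-element map
  set bElt : Finset V → V := fun S => if h : ∃ x, bad S x then h.choose else u with hbElt
  have bElt_spec : ∀ S, ¬ noBad S → bad S (bElt S) := by
    intro S h
    have hex := not_noBad S h
    simp only [hbElt, dif_pos hex]
    exact hex.choose_spec
  have hP3card : P3.card ≤ DTu.card := by
    apply Finset.card_le_card_of_injOn (fun S => toSub (insert (bElt S) S))
    · intro S hS
      obtain ⟨hSDu, hnb⟩ := Finset.mem_filter.mp hS
      obtain ⟨hSdom, huS⟩ := Finset.mem_filter.mp hSDu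
      have hbS := bElt_spec S hnb
      refine mem_domSets.mpr ?_
      intro x hx
      have hxmem : (x : V) ∉ insert (bElt S) S := fun h => hx ((mem_toSub _ x).mpr h)
      have hxS : (x : V) ∉ S := fun h => hxmem (Finset.mem_insert_of_mem h)
      have hxb : (x : V) ≠ bElt S := fun h => hxmem (h ▸ Finset.mem_insert_self _ _)
      -- x is not bad, else it would equal bElt S
      have hxnotbad : ¬ bad S (x : V) := by
        intro hbx
        exact hxb (badSub S hSDu S hSDu _ _ hbx hbS)
      simp only [hbad, not_and, not_forall] at hxnotbad
      obtain ⟨y, hyS, hy, hyu⟩ := hxnotbad hxS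
      exact ⟨⟨y, hyu⟩, (mem_toSub _ _).mpr (Finset.mem_insert_of_mem hyS),
        (gu_adj _ _).mpr hy⟩
    · intro S₁ h₁ S₂ h₂ heq
      obtain ⟨hSDu₁, hnb₁⟩ := Finset.mem_filter.mp h₁
      obtain ⟨hSDu₂, hnb₂⟩ := Finset.mem_filter.mp h₂
      obtain ⟨-, hu₁⟩ := Finset.mem_filter.mp hSDu₁
      obtain ⟨-, hu₂⟩ := Finset.mem_filter.mp hSDu₂
      have hb₁ := bElt_spec S₁ hnb₁
      have hb₂ := bElt_spec S₂ hnb₂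
      have hbb : bElt S₁ = bElt S₂ := badSub S₁ hSDu₁ S₂ hSDu₂ _ _ hb₁ hb₂
      ext x
      by_cases hxu : x = u
      · subst hxu; simp [hu₁, hu₂]
      · by_cases hxb : x = bElt S₁
        · subst hxb
          constructor
          · intro h; exact absurd h hb₁.1
          · intro h; rw [hbb] at h; exact absurd h hb₂.1
        · have hxb2 : x ≠ bElt S₂ := hbb ▸ hxb
          have hiff : (⟨x, hxu⟩ : ({u}ᶜ : Set V)) ∈ toSub (insert (bElt S₁) S₁) ↔
              (⟨x, hxu⟩ : ({u}ᶜ : Set V)) ∈ toSub (insert (bElt S₂) S₂) := by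
            have heq' : toSub (insert (bElt S₁) S₁) = toSub (insert (bElt S₂) S₂) := heq
            rw [heq']
          simp only [mem_toSub, Finset.mem_insert] at hiff
          constructor
          · intro h
            rcases hiff.mp (Or.inr h) with h' | h'
            · exact absurd h' hxb2
            · exact h'
          · intro h
            rcases hiff.mpr (Or.inr h) with h' | h'
            · exact absurd h' hxb
            · exact h'
  ------------------------------------------------------------------
  -- Put everything together
  ------------------------------------------------------------------
  have hDsplit : Du.card + Dnu.card = (domSets T).card := by
    simpa using Finset.card_filter_add_card_filter_not
      (s := domSets T) (p := fun S => u ∈ S)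
  have h1 : D1.card ≤ A.card + B.card + C.card :=
    le_trans (Finset.card_le_card hcover1)
      (le_trans (Finset.card_union_le _ _)
        (by gcongr; exact Finset.card_union_le _ _))
  have h2 : Du.card ≤ P1.card + P2.card + P3.card :=
    le_trans (Finset.card_le_card hcover2)
      (le_trans (Finset.card_union_le _ _)
        (by gcongr; exact Finset.card_union_le _ _))
  have hDu : Du.card ≤ Dnu.card + DTu.card + DTu.card := by
    calc Du.card ≤ P1.card + P2.card + P3.card := h2
      _ ≤ Dnu.card + DTu.card + DTu.card := by gcongr
  calc D1.card ≤ A.card + B.card + C.card := h1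
    _ ≤ Du.card + Du.card + DTu.card := by gcongr
    _ ≤ Du.card + (Dnu.card + DTu.card + DTu.card) + DTu.card := by gcongr
    _ = (Du.card + Dnu.card) + 3 * DTu.card := by ring
    _ = (domSets T).card + 3 * DTu.card := by rw [hDsplit]
end

section
/- Let T be a tree with |V(T)| ≥ 3 and let u be a vertex of T that is not a support vertex of T and has at most one neighbor in T that is not a support vertex of T. Then |𝒟(T)| ≤ 3·|𝒟(T∖u)|, where T∖u is the induced subgraph on V(T) ∖ {u}. -/
open scoped Classical

/-- If `T` is a tree on at least three vertices and `u` is not a support vertex of `T` and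
has at most one non-support neighbor, then `|𝒟(T)| ≤ 3·|𝒟(T∖u)|`. -/
theorem domSets_le_three {V : Type*} [Fintype V] (T : SimpleGraph V)
    (htree : T.IsTree) (hn : 3 ≤ Fintype.card V) (u : V)
    (hu : ¬ IsSupport T u)
    (hone : {x | T.Adj u x ∧ ¬ IsSupport T x}.ncard ≤ 1) :
    (domSets T).card ≤ 3 * (domSets (T.induce ({u}ᶜ))).card := by
  classical
  have hconn : T.Connected := htree.isConnected
  -- u has a neighbor
  have hex : ∃ x, T.Adj u x := by
    obtain ⟨y, hy⟩ := Fintype.exists_ne_of_one_lt_card (by omega) u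
    obtain ⟨w⟩ := hconn.preconnected u y
    cases w with
    | nil => exact absurd rfl hy.symm
    | cons h p => exact ⟨_, h⟩
  -- choice of the special neighbor v
  set v : V := if h : ∃ x, T.Adj u x ∧ ¬ IsSupport T x then h.choose else hex.choose with hvdef
  have hv_adj : T.Adj u v := by
    rw [hvdef]; split
    · exact (Exists.choose_spec ‹∃ x, T.Adj u x ∧ ¬ IsSupport T x›).1
    · exact hex.choose_spec
  have hv_uniq : ∀ w, T.Adj u w → ¬ IsSupport T w → w = v := by
    intro w hw hwsupp
    have hne : ∃ x, T.Adj u x ∧ ¬ IsSupport T x := ⟨w, hw, hwsupp⟩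
    have hv_mem : v ∈ {x | T.Adj u x ∧ ¬ IsSupport T x} := by
      rw [hvdef]; simp only [hne, dif_pos]; exact hne.choose_spec
    have hw_mem : w ∈ {x | T.Adj u x ∧ ¬ IsSupport T x} := ⟨hw, hwsupp⟩
    exact (Set.ncard_le_one (Set.toFinite _)).mp hone w hw_mem v hv_mem
  have hvne : v ≠ u := fun h => T.irrefl (h ▸ hv_adj)
  -- a leaf has a unique neighbor
  have hleaf_nbr : ∀ ℓ w, IsLeaf T ℓ → T.Adj w ℓ → ∀ s, T.Adj s ℓ → s = w := by
    intro ℓ w hℓ hw s hs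
    obtain ⟨a, ha⟩ := Finset.card_eq_one.mp (hℓ : (T.neighborFinset ℓ).card = 1)
    have hw' : w ∈ T.neighborFinset ℓ := by simp [hw.symm]
    have hs' : s ∈ T.neighborFinset ℓ := by simp [hs.symm]
    rw [ha, Finset.mem_singleton] at hw' hs'
    rw [hs', hw']
  -- the map on finsets
  set D : Finset V → Finset V := fun S => if u ∈ S then insert v (S.erase u) else S with hD
  set f : Finset V → Finset ({u}ᶜ : Set V) :=
    fun S => (D S).subtype (fun x => x ∈ ({u}ᶜ : Set V)) with hf
  set tag : Finset V → ℕ := fun S => if u ∈ S then (if v ∈ S then 1 else 2) else 0 with htag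
  have hmem_dom : ∀ S : Finset V, S ∈ domSets T ↔ ∀ x ∉ S, ∃ s ∈ S, T.Adj s x := by
    intro S; simp [domSets]
  have hmem_dom' : ∀ S : Finset ({u}ᶜ : Set V),
      S ∈ domSets (T.induce ({u}ᶜ)) ↔ ∀ x ∉ S, ∃ s ∈ S, T.Adj (s : V) (x : V) := by
    intro S
    simp only [domSets, Finset.mem_filter, Finset.mem_univ, true_and]
    constructor
    · intro h x hx; obtain ⟨s, hs, hadj⟩ := h x hx; exact ⟨s, hs, hadj⟩
    · intro h x hx; obtain ⟨s, hs, hadj⟩ := h x hx; exact ⟨s, hs, hadj⟩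
  have hmem_f : ∀ S (x : V) (hx : x ∈ ({u}ᶜ : Set V)), (⟨x, hx⟩ : ({u}ᶜ : Set V)) ∈ f S ↔ x ∈ D S := by
    intro S x hx; simp [hf, Finset.mem_subtype]
  -- key : f maps dominating sets to dominating sets
  have hdom : ∀ S ∈ domSets T, f S ∈ domSets (T.induce ({u}ᶜ)) := by
    intro S hS
    rw [hmem_dom] at hS
    rw [hmem_dom']
    rintro ⟨x, hxu⟩ hx
    rw [hmem_f] at hx
    have hxu' : x ≠ u := hxu
    by_cases huS : u ∈ S
    · -- D S = insert v (S.erase u)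
      rw [hD] at hx
      simp only [huS, if_pos, Finset.mem_insert, Finset.mem_erase] at hx
      push_neg at hx
      obtain ⟨hxv, hxS⟩ := hx
      have hxS' : x ∉ S := fun h => hxS hxu' h
      obtain ⟨s, hsS, hadj⟩ := hS x hxS'
      by_cases hsu : s = u
      · -- x is a neighbor of u with no other dominator; x ≠ v, so x is a support vertex
        have hadj' : T.Adj u x := hsu ▸ hadj
        have hxsupp : IsSupport T x := by
          by_contra hns
          exact hxv (hv_uniq x hadj' hns)
        obtain ⟨ℓ, hℓadj, hℓleaf⟩ := hxsupp
        by_cases hℓu : ℓ = u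
        · -- then all neighbors of u equal x, so v = x, contradiction
          exact absurd (hleaf_nbr u x (hℓu ▸ hℓleaf) (hℓu ▸ hℓadj) v hv_adj.symm).symm hxv
        · -- ℓ ∈ S, since its only neighbor x is not in S
          have hℓS : ℓ ∈ S := by
            by_contra hℓS
            obtain ⟨s', hs'S, hs'adj⟩ := hS ℓ hℓS
            rw [hleaf_nbr ℓ x hℓleaf hℓadj s' hs'adj] at hs'S
            exact hxS' hs'S
          refine ⟨⟨ℓ, hℓu⟩, ?_, hℓadj.symm⟩
          refine (hmem_f S ℓ hℓu).mpr ?_; rw [hD]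
          simp [huS, Finset.mem_erase, hℓu, hℓS]
      · refine ⟨⟨s, hsu⟩, ?_, hadj⟩
        refine (hmem_f S s hsu).mpr ?_; rw [hD]
        simp [huS, Finset.mem_erase, hsu, hsS]
    · rw [hD] at hx
      simp only [huS, if_neg, if_false] at hx
      obtain ⟨s, hsS, hadj⟩ := hS x hx
      have hsu : s ≠ u := fun h => huS (h ▸ hsS)
      refine ⟨⟨s, hsu⟩, ?_, hadj⟩
      refine (hmem_f S s hsu).mpr ?_; rw [hD]
      simp [huS, hsS]
  -- membership recovery
  have hrec : ∀ S : Finset V, ∀ x, x ≠ u →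
      (x ∈ S ↔ (x ∈ D S ∧ (tag S = 2 → x ≠ v))) := by
    intro S x hx
    rw [hD, htag]
    by_cases huS : u ∈ S
    · by_cases hvS : v ∈ S
      · simp only [huS, hvS, if_pos, Finset.mem_insert, Finset.mem_erase]
        constructor
        · intro h; exact ⟨Or.inr ⟨hx, h⟩, by simp⟩
        · rintro ⟨h | ⟨-, h⟩, -⟩
          · exact h ▸ hvS
          · exact h
      · simp only [huS, hvS, if_pos, if_neg, Finset.mem_insert, Finset.mem_erase]
        constructor
        · intro h
          exact ⟨Or.inr ⟨hx, h⟩, fun _ hxv => hvS (hxv ▸ h)⟩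
        · rintro ⟨h | ⟨-, h⟩, h2⟩
          · exact absurd h (h2 rfl)
          · exact h
    · simp [huS]
  have hu_tag : ∀ S : Finset V, (u ∈ S ↔ tag S ≠ 0) := by
    intro S; rw [htag]
    by_cases huS : u ∈ S <;> by_cases hvS : v ∈ S <;> simp [huS, hvS]
  -- the injection
  have hinj : Set.InjOn (fun S => (f S, tag S)) (domSets T : Set (Finset V)) := by
    intro S1 h1 S2 h2 heq
    simp only [Prod.mk.injEq] at heq
    obtain ⟨hfeq, hteq⟩ := heq
    ext x
    by_cases hx : x = u
    · subst hx; rw [hu_tag, hu_tag, hteq]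
    · rw [hrec S1 x hx, hrec S2 x hx, hteq]
      have : x ∈ D S1 ↔ x ∈ D S2 := by
        rw [← hmem_f S1 x hx, ← hmem_f S2 x hx, hfeq]
      rw [this]
  have hmaps : ∀ S ∈ domSets T,
      (fun S => (f S, tag S)) S ∈ (domSets (T.induce ({u}ᶜ))) ×ˢ ({0, 1, 2} : Finset ℕ) := by
    intro S hS
    rw [Finset.mem_product]
    refine ⟨hdom S hS, ?_⟩
    rw [htag]
    by_cases huS : u ∈ S <;> by_cases hvS : v ∈ S <;> simp [huS, hvS]
  calc (domSets T).card
      ≤ ((domSets (T.induce ({u}ᶜ))) ×ˢ ({0, 1, 2} : Finset ℕ)).card :=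
        Finset.card_le_card_of_injOn _ hmaps hinj
    _ = 3 * (domSets (T.induce ({u}ᶜ))).card := by
        rw [Finset.card_product]
        simp [mul_comm]
end

section
/- Let G be a graph and let w be a support vertex of G whose set of leaf neighbors is L_G(w) = {v_1, …, v_t} with t ≥ 1. Let H be the induced subgraph of G on V(G) ∖ (L_G(w) ∪ {w}). Suppose every vertex of N_G(w) ∖ L_G(w) is a support vertex of G. Then the domination polynomials satisfy D_G(x) = x^t·D_H(x) + Σ_{i=0}^{t−1} C(t−1, i)·(x^{i+2} + x^{i+1})·D_H(x); equivalently, D_G(x) = (x^t + x(x+1)^t)·D_H(x). -/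
open scoped Classical

open Finset in
theorem domPoly_aux {V : Type*} [Fintype V] (G : SimpleGraph V) (w : V)
    (t : ℕ) (ht : 1 ≤ t) (hcard : (leafNbrSet G w).ncard = t)
    (hsupp : ∀ u ∈ G.neighborSet w \ leafNbrSet G w, IsSupport G u) (x : ℚ) :
    domPoly G x =
      (x ^ t + x * (x + 1) ^ t) * domPoly (G.induce ((leafNbrSet G w ∪ {w})ᶜ)) x := by
  set L : Set V := leafNbrSet G w with hLdef
  set Wc : Set V := (L ∪ {w})ᶜ with hWcdef
  set Lf : Finset V := L.toFinset with hLfdef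
  set H := G.induce Wc with hHdef
  set emb : ↥Wc ↪ V := Function.Embedding.subtype _ with hembdef
  have hembval : ∀ a : ↥Wc, emb a = (a : V) := fun a => rfl
  have hLfmem : ∀ v, v ∈ Lf ↔ G.Adj w v ∧ G.degree v = 1 := by
    intro v
    simp [hLfdef, hLdef, leafNbrSet, IsLeaf, Set.mem_toFinset]
  -- a leaf has a unique neighbor
  have hleafu : ∀ z, G.degree z = 1 → ∀ a b, G.Adj a z → G.Adj b z → a = b := by
    intro z hz a b ha hb
    have h1 : (G.neighborFinset z).card = 1 := by rwa [G.card_neighborFinset_eq_degree]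
    obtain ⟨c, hc⟩ := Finset.card_eq_one.1 h1
    have ha' : a ∈ G.neighborFinset z := by rw [SimpleGraph.mem_neighborFinset]; exact ha.symm
    have hb' : b ∈ G.neighborFinset z := by rw [SimpleGraph.mem_neighborFinset]; exact hb.symm
    rw [hc, Finset.mem_singleton] at ha' hb'
    rw [ha', hb']
  have hleaf_only : ∀ v ∈ Lf, ∀ u, G.Adj u v → u = w := by
    intro v hv u hu
    obtain ⟨hwv, hdeg⟩ := (hLfmem v).1 hv
    exact hleafu v hdeg u w hu hwv
  have hwLf : w ∉ Lf := by
    intro h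
    exact G.loopless.irrefl w ((hLfmem w).1 h).1
  have hLfcard : Lf.card = t := by
    rw [hLfdef, ← Set.ncard_eq_toFinset_card']; exact hcard
  have hLfne : Lf.Nonempty := by
    rw [← Finset.card_pos, hLfcard]; exact ht
  have hLfW : ∀ v ∈ Lf, v ∈ L ∪ {w} := by
    intro v hv; exact Set.mem_union_left _ (Set.mem_toFinset.1 hv)
  have hwW : w ∈ L ∪ {w} := Set.mem_union_right _ rfl
  have hWcne : ∀ a : ↥Wc, (a : V) ≠ w := by
    intro a h
    apply a.2
    rw [h]
    exact hwW
  have hWcnL : ∀ a : ↥Wc, (a : V) ∉ Lf := by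
    intro a h; exact a.2 (hLfW _ h)
  have hmemG : ∀ S : Finset V, S ∈ domSets G ↔ ∀ v ∉ S, ∃ u ∈ S, G.Adj u v := by
    intro S; simp [domSets]
  have hmemH : ∀ S' : Finset ↥Wc, S' ∈ domSets H ↔ ∀ v ∉ S', ∃ u ∈ S', G.Adj ↑u ↑v := by
    intro S'; simp [domSets, hHdef, SimpleGraph.induce]
  have hmemmap : ∀ (S' : Finset ↥Wc) (a : ↥Wc), (a : V) ∈ S'.map emb ↔ a ∈ S' := by
    intro S' a
    constructor
    · intro h
      obtain ⟨b, hb, hba⟩ := Finset.mem_map.1 h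
      rwa [show b = a from Subtype.ext hba] at hb
    · intro h; exact Finset.mem_map_of_mem _ h
  have hmapWc : ∀ (S' : Finset ↥Wc) (v : V), v ∈ S'.map emb → v ∈ Wc := by
    intro S' v h
    obtain ⟨b, _, hb⟩ := Finset.mem_map.1 h
    rw [← hb]; exact b.2
  -- Key equivalence 1 : w ∉ S case
  have key1 : ∀ S' : Finset ↥Wc, (Lf ∪ S'.map emb) ∈ domSets G ↔ S' ∈ domSets H := by
    intro S'
    rw [hmemG, hmemH]
    constructor
    · intro h v' hv'
      have hnot : (v' : V) ∉ Lf ∪ S'.map emb := by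
        rw [Finset.mem_union]
        rintro (h1 | h1)
        · exact hWcnL v' h1
        · exact hv' ((hmemmap S' v').1 h1)
      obtain ⟨u, hu, hadj⟩ := h _ hnot
      rcases Finset.mem_union.1 hu with hu | hu
      · exact absurd (hleaf_only u hu _ hadj.symm) (hWcne v')
      · obtain ⟨u', hu', rfl⟩ := Finset.mem_map.1 hu
        exact ⟨u', hu', hadj⟩
    · intro h v hv
      by_cases hvW : v ∈ Wc
      · have hv' : (⟨v, hvW⟩ : ↥Wc) ∉ S' := by
          intro h1
          exact hv (Finset.mem_union_right _ ((hmemmap S' ⟨v, hvW⟩).2 h1))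
        obtain ⟨u', hu', hadj⟩ := h _ hv'
        exact ⟨↑u', Finset.mem_union_right _ ((hmemmap S' u').2 hu'), hadj⟩
      · have hvW' : v ∈ L ∪ {w} := not_not.mp (by simpa [hWcdef] using hvW)
        rcases hvW' with h1 | h1
        · exact absurd (Finset.mem_union_left _ (Set.mem_toFinset.2 h1)) hv
        · obtain ⟨v0, hv0⟩ := hLfne
          refine ⟨v0, Finset.mem_union_left _ hv0, ?_⟩
          have := ((hLfmem v0).1 hv0).1
          rw [Set.mem_singleton_iff] at h1
          rw [h1]
          exact this.symm
  -- Key equivalence 2 : w ∈ S case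
  have key2 : ∀ A ∈ Lf.powerset, ∀ S' : Finset ↥Wc,
      (insert w (A ∪ S'.map emb)) ∈ domSets G ↔ S' ∈ domSets H := by
    intro A hA S'
    have hA : A ⊆ Lf := Finset.mem_powerset.1 hA
    rw [hmemG, hmemH]
    constructor
    · intro h v' hv'
      have hnot : (v' : V) ∉ insert w (A ∪ S'.map emb) := by
        rw [Finset.mem_insert, Finset.mem_union]
        rintro (h1 | h1 | h1)
        · exact hWcne v' h1
        · exact hWcnL v' (hA h1)
        · exact hv' ((hmemmap S' v').1 h1)
      obtain ⟨u, hu, hadj⟩ := h _ hnot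
      rcases Finset.mem_insert.1 hu with hu0 | hu
      · -- dominated only by w; use the support hypothesis
        rw [hu0] at hadj
        have hvL : (v' : V) ∉ L := fun h1 => v'.2 (Set.mem_union_left _ h1)
        obtain ⟨z, hz_adj, hz_leaf⟩ := hsupp ↑v' ⟨hadj, hvL⟩
        have hz_deg : G.degree z = 1 := hz_leaf
        have hzLf : z ∉ Lf := by
          intro h1
          exact hWcne v' (hleaf_only z h1 _ hz_adj)
        have hzw : z ≠ w := by
          intro h0
          rw [h0] at hz_adj hz_deg
          obtain ⟨v0, hv0⟩ := hLfne
          have h2 : v0 = (v' : V) :=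
            hleafu w hz_deg v0 ↑v' ((hLfmem v0).1 hv0).1.symm hz_adj
          exact hWcnL v' (h2 ▸ hv0)
        have hzW : z ∈ Wc := by
          rintro (h1 | h1)
          · exact hzLf (Set.mem_toFinset.2 h1)
          · exact hzw h1
        have hzS : z ∈ insert w (A ∪ S'.map emb) := by
          by_contra hzS
          obtain ⟨u2, hu2, hadj2⟩ := h z hzS
          have : u2 = (v' : V) := hleafu z hz_deg u2 ↑v' hadj2 hz_adj
          rw [this] at hu2
          exact hnot hu2
        have hzS' : (⟨z, hzW⟩ : ↥Wc) ∈ S' := by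
          rcases Finset.mem_insert.1 hzS with h1 | h1
          · exact absurd h1 hzw
          rcases Finset.mem_union.1 h1 with h1 | h1
          · exact absurd (hA h1) hzLf
          · exact (hmemmap S' ⟨z, hzW⟩).1 h1
        exact ⟨⟨z, hzW⟩, hzS', hz_adj.symm⟩
      rcases Finset.mem_union.1 hu with hu | hu
      · exact absurd (hleaf_only u (hA hu) _ hadj.symm) (hWcne v')
      · obtain ⟨u', hu', rfl⟩ := Finset.mem_map.1 hu
        exact ⟨u', hu', hadj⟩
    · intro h v hv
      by_cases hvW : v ∈ Wc
      · have hv' : (⟨v, hvW⟩ : ↥Wc) ∉ S' := by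
          intro h1
          exact hv (Finset.mem_insert_of_mem
            (Finset.mem_union_right _ ((hmemmap S' ⟨v, hvW⟩).2 h1)))
        obtain ⟨u', hu', hadj⟩ := h _ hv'
        exact ⟨↑u', Finset.mem_insert_of_mem
          (Finset.mem_union_right _ ((hmemmap S' u').2 hu')), hadj⟩
      · have hvW' : v ∈ L ∪ {w} := not_not.mp (by simpa [hWcdef] using hvW)
        rcases hvW' with h1 | h1
        · exact ⟨w, Finset.mem_insert_self _ _, h1.1⟩
        · rw [Set.mem_singleton_iff] at h1
          subst h1
          exact absurd (Finset.mem_insert_self _ _) hv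
  -- decomposition, case w ∉ S
  have hLfsub : ∀ S ∈ domSets G, w ∉ S → Lf ⊆ S := by
    intro S hS hwS v hv
    by_contra hvS
    obtain ⟨u, huS, hadj⟩ := (hmemG S).1 hS v hvS
    rw [hleaf_only v hv u hadj] at huS
    exact hwS huS
  have decompA : ∀ S ∈ domSets G, w ∉ S →
      S = Lf ∪ (S.subtype (· ∈ Wc)).map emb := by
    intro S hS hwS
    rw [hembdef, Finset.subtype_map]
    ext v
    simp only [Finset.mem_union, Finset.mem_filter]
    constructor
    · intro hv
      by_cases hvW : v ∈ Wc
      · exact Or.inr ⟨hv, hvW⟩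
      · left
        have hv' : v ∈ L ∪ {w} := not_not.mp (by simpa [hWcdef] using hvW)
        rcases hv' with h1 | h1
        · exact Set.mem_toFinset.2 h1
        · rw [Set.mem_singleton_iff] at h1
          exact absurd (h1 ▸ hv) hwS
    · rintro (hv | ⟨hv, _⟩)
      · exact hLfsub S hS hwS hv
      · exact hv
  -- decomposition, case w ∈ S
  have decompB : ∀ S : Finset V, w ∈ S →
      S = insert w ((S ∩ Lf) ∪ (S.subtype (· ∈ Wc)).map emb) := by
    intro S hwS
    rw [hembdef, Finset.subtype_map]
    ext v
    simp only [Finset.mem_insert, Finset.mem_union, Finset.mem_inter, Finset.mem_filter]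
    constructor
    · intro hv
      by_cases hvW : v ∈ Wc
      · exact Or.inr (Or.inr ⟨hv, hvW⟩)
      · have hv' : v ∈ L ∪ {w} := not_not.mp (by simpa [hWcdef] using hvW)
        rcases hv' with h1 | h1
        · exact Or.inr (Or.inl ⟨hv, Set.mem_toFinset.2 h1⟩)
        · exact Or.inl h1
    · rintro (rfl | ⟨hv, _⟩ | ⟨hv, _⟩) <;> first | exact hwS | exact hv
  -- cardinalities
  have hdisj : ∀ (A : Finset V), A ⊆ Lf → ∀ S' : Finset ↥Wc, Disjoint A (S'.map emb) := by
    intro A hA S'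
    rw [Finset.disjoint_left]
    intro v hv hv'
    exact (hmapWc S' v hv') (hLfW v (hA hv))
  -- split the sum
  rw [domPoly]
  rw [← Finset.sum_filter_add_sum_filter_not (domSets G) (fun S => w ∈ S) (fun S => x ^ S.card)]
  have sumB : ∑ S ∈ (domSets G).filter (fun S => w ∈ S), x ^ S.card
      = ∑ p ∈ Lf.powerset ×ˢ domSets H, x ^ (1 + p.1.card + p.2.card) := by
    refine Finset.sum_nbij' (fun S => (S ∩ Lf, S.subtype (· ∈ Wc)))
      (fun p => insert w (p.1 ∪ p.2.map emb)) ?_ ?_ ?_ ?_ ?_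
    · intro S hS
      rw [Finset.mem_filter] at hS
      obtain ⟨hS, hwS⟩ := hS
      rw [Finset.mem_product]
      constructor
      · exact Finset.mem_powerset.2 Finset.inter_subset_right
      · have hP : S ∩ Lf ∈ Lf.powerset := Finset.mem_powerset.2 Finset.inter_subset_right
        exact (key2 _ hP _).1 (by rw [← decompB S hwS]; exact hS)
    · intro p hp
      rw [Finset.mem_product] at hp
      rw [Finset.mem_filter]
      exact ⟨(key2 _ hp.1 _).2 hp.2, Finset.mem_insert_self _ _⟩
    · intro S hS
      rw [Finset.mem_filter] at hS
      exact (decompB S hS.2).symm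
    · intro p hp
      rw [Finset.mem_product] at hp
      obtain ⟨hp1, hp2⟩ := hp
      have hp1' : p.1 ⊆ Lf := Finset.mem_powerset.1 hp1
      have e1 : insert w (p.1 ∪ p.2.map emb) ∩ Lf = p.1 := by
        ext v
        simp only [Finset.mem_inter, Finset.mem_insert, Finset.mem_union]
        constructor
        · rintro ⟨rfl | h1 | h1, h2⟩
          · exact absurd h2 hwLf
          · exact h1
          · exact absurd (hLfW v h2) (hmapWc _ v h1)
        · intro h; exact ⟨Or.inr (Or.inl h), hp1' h⟩
      have e2 : (insert w (p.1 ∪ p.2.map emb)).subtype (· ∈ Wc) = p.2 := by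
        ext a
        rw [Finset.mem_subtype]
        simp only [Finset.mem_insert, Finset.mem_union]
        constructor
        · rintro (h1 | h1 | h1)
          · exact absurd h1 (hWcne a)
          · exact absurd (hp1' h1) (hWcnL a)
          · exact (hmemmap _ a).1 h1
        · intro h; exact Or.inr (Or.inr ((hmemmap _ a).2 h))
      rw [e1, e2]
    · intro S hS
      rw [Finset.mem_filter] at hS
      obtain ⟨hS, hwS⟩ := hS
      congr 1
      conv_lhs => rw [decompB S hwS]
      rw [Finset.card_insert_of_notMem, Finset.card_union_of_disjoint
        (hdisj _ Finset.inter_subset_right _), Finset.card_map]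
      · ring
      · rw [Finset.mem_union]
        rintro (h1 | h1)
        · exact hwLf (Finset.mem_inter.1 h1).2
        · exact (hmapWc _ w h1) hwW
  have sumA : ∑ S ∈ (domSets G).filter (fun S => ¬ w ∈ S), x ^ S.card
      = ∑ S' ∈ domSets H, x ^ (t + S'.card) := by
    refine Finset.sum_nbij' (fun S => S.subtype (· ∈ Wc))
      (fun S' => Lf ∪ S'.map emb) ?_ ?_ ?_ ?_ ?_
    · intro S hS
      rw [Finset.mem_filter] at hS
      exact (key1 _).1 (by rw [← decompA S hS.1 hS.2]; exact hS.1)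
    · intro S' hS'
      rw [Finset.mem_filter]
      refine ⟨(key1 S').2 hS', ?_⟩
      rw [Finset.mem_union]
      rintro (h1 | h1)
      · exact hwLf h1
      · exact (hmapWc _ w h1) hwW
    · intro S hS
      rw [Finset.mem_filter] at hS
      exact (decompA S hS.1 hS.2).symm
    · intro S' hS'
      ext a
      rw [Finset.mem_subtype]
      simp only [Finset.mem_union]
      constructor
      · rintro (h1 | h1)
        · exact absurd h1 (hWcnL a)
        · exact (hmemmap _ a).1 h1
      · intro h; exact Or.inr ((hmemmap _ a).2 h)
    · intro S hS
      rw [Finset.mem_filter] at hS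
      congr 1
      conv_lhs => rw [decompA S hS.1 hS.2]
      rw [Finset.card_union_of_disjoint (hdisj Lf (le_refl _) _), Finset.card_map, hLfcard]
  rw [sumA, sumB]
  -- evaluate both sums
  have hDH : domPoly H x = ∑ S' ∈ domSets H, x ^ S'.card := rfl
  have hpow : ∑ A ∈ Lf.powerset, x ^ A.card = (x + 1) ^ t := by
    have h := Finset.prod_add (fun _ : V => x) (fun _ : V => 1) Lf
    simp only [Finset.prod_const, one_pow, mul_one] at h
    rw [← hLfcard, ← h]
  have e1 : ∑ S' ∈ domSets H, x ^ (t + S'.card) = x ^ t * domPoly H x := by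
    rw [hDH, Finset.mul_sum]
    exact Finset.sum_congr rfl fun S' _ => by rw [pow_add]
  have e2 : ∑ p ∈ Lf.powerset ×ˢ domSets H, x ^ (1 + p.1.card + p.2.card)
      = x * (x + 1) ^ t * domPoly H x := by
    rw [Finset.sum_product]
    have : ∀ A ∈ Lf.powerset, ∑ S' ∈ domSets H, x ^ (1 + A.card + S'.card)
        = x * x ^ A.card * domPoly H x := by
      intro A _
      rw [hDH, Finset.mul_sum]
      exact Finset.sum_congr rfl fun S' _ => by rw [pow_add, pow_add, pow_one]
    rw [Finset.sum_congr rfl this, ← Finset.sum_mul, ← Finset.mul_sum, hpow]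
  rw [e1, e2]
  ring

theorem choose_identity (s : ℕ) (x : ℚ) :
    ∑ i ∈ Finset.range (s + 1), ((s + 1 - 1).choose i : ℚ) * (x ^ (i + 2) + x ^ (i + 1))
      = x * (x + 1) ^ (s + 1) := by
  have hb : (x + 1 : ℚ) ^ s
      = ∑ i ∈ Finset.range (s + 1), x ^ i * 1 ^ (s - i) * (s.choose i : ℚ) := add_pow x 1 s
  calc ∑ i ∈ Finset.range (s + 1), ((s + 1 - 1).choose i : ℚ) * (x ^ (i + 2) + x ^ (i + 1))
      = ∑ i ∈ Finset.range (s + 1), (x * (x + 1)) * (x ^ i * 1 ^ (s - i) * (s.choose i : ℚ)) := by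
        refine Finset.sum_congr rfl fun i _ => ?_
        rw [Nat.add_sub_cancel, one_pow]
        ring
    _ = (x * (x + 1)) * ∑ i ∈ Finset.range (s + 1), x ^ i * 1 ^ (s - i) * (s.choose i : ℚ) := by
        rw [Finset.mul_sum]
    _ = x * (x + 1) ^ (s + 1) := by rw [← hb]; ring

/-- Let `w` be a support vertex of `G` with exactly `t ≥ 1` leaf neighbors such that every
non-leaf neighbor of `w` is a support vertex, and let `H = G ∖ (L_G(w) ∪ {w})`.  Then
`D_G(x) = x^t·D_H(x) + Σ_{i=0}^{t−1} C(t−1,i)·(x^{i+2}+x^{i+1})·D_H(x)`; equivalently,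
`D_G(x) = (x^t + x(x+1)^t)·D_H(x)`. -/
theorem domPoly_support_vertex {V : Type*} [Fintype V] (G : SimpleGraph V) (w : V)
    (t : ℕ) (ht : 1 ≤ t) (hcard : (leafNbrSet G w).ncard = t)
    (hsupp : ∀ u ∈ G.neighborSet w \ leafNbrSet G w, IsSupport G u) (x : ℚ) :
    (domPoly G x =
        x ^ t * domPoly (G.induce ((leafNbrSet G w ∪ {w})ᶜ)) x +
          ∑ i ∈ Finset.range t,
            ((t - 1).choose i : ℚ) * (x ^ (i + 2) + x ^ (i + 1)) *
              domPoly (G.induce ((leafNbrSet G w ∪ {w})ᶜ)) x) ∧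
      domPoly G x =
        (x ^ t + x * (x + 1) ^ t) * domPoly (G.induce ((leafNbrSet G w ∪ {w})ᶜ)) x := by
  obtain ⟨s, rfl⟩ : ∃ s, t = s + 1 := ⟨t - 1, (Nat.succ_pred_eq_of_pos ht).symm⟩
  have h2 := domPoly_aux G w (s + 1) ht hcard hsupp x
  refine ⟨?_, h2⟩
  rw [h2, ← Finset.sum_mul, choose_identity s x]
  ring
end
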